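/- arXiv:1302.5811 — 5 statements merged into one kernel-verified Lean document; each statement's English description precedes it below -/
import Mathlib

section
/- Two finite decreasing filtrations F and G on an object A of an abelian category are n-opposite (i.e. Gr_F^p Gr_G^q (A) = 0 for p+q ≠ n) if and only if for all p, q with p + q = n + 1 one has F^p(A) ⊕ G^q(A) ≅ A (the natural map F^p(A) × G^q(A) → A is an isomorphism). -/
/-- Two finite decreasing filtrations `F` and `G` on a (finite-dimensional) vector space
`A` are `n`-opposite — i.e. `Gr_F^p Gr_G^q (A) = 0` for `p+q ≠ n`, expressed at the
subspace level as `F^p ∩ G^q ⊆ (F^{p+1} ∩ G^q) + (F^p ∩ G^{q+1})` — if and only if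
for all `p + q = n + 1` one has `F^p(A) ⊕ G^q(A) ≅ A`, i.e. `F^p` and `G^q` are
complementary. -/
theorem stmt6 (K A : Type*) [Field K] [AddCommGroup A] [Module K A]
    [FiniteDimensional K A]
    (F G : ℤ → Submodule K A) (hF : Antitone F) (hG : Antitone G)
    (hFtop : ∃ a, F a = ⊤) (hFbot : ∃ a, F a = ⊥)
    (hGtop : ∃ a, G a = ⊤) (hGbot : ∃ a, G a = ⊥) (n : ℤ) :
    (∀ p q : ℤ, p + q ≠ n →
        F p ⊓ G q ≤ (F (p + 1) ⊓ G q) ⊔ (F p ⊓ G (q + 1))) ↔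
    (∀ p q : ℤ, p + q = n + 1 → IsCompl (F p) (G q)) := by
  constructor
  · intro hopp
    obtain ⟨a, ha⟩ := hFbot
    obtain ⟨b, hb⟩ := hGbot
    obtain ⟨a₀, ha₀⟩ := hFtop
    obtain ⟨b₀, hb₀⟩ := hGtop
    -- Lemma 1 : F p ⊓ G q = ⊥ for p + q > n
    have L1 : ∀ k : ℕ, ∀ p q : ℤ, (a - p).toNat + (b - q).toNat ≤ k →
        n < p + q → F p ⊓ G q = ⊥ := by
      intro k
      induction k with
      | zero =>
        intro p q hk hpq
        have hap : a ≤ p := by omega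
        exact eq_bot_iff.mpr (inf_le_left.trans (ha ▸ hF hap))
      | succ k ih =>
        intro p q hk hpq
        rcases le_or_gt a p with hap | hap
        · exact eq_bot_iff.mpr (inf_le_left.trans (ha ▸ hF hap))
        rcases le_or_gt b q with hbq | hbq
        · exact eq_bot_iff.mpr (inf_le_right.trans (hb ▸ hG hbq))
        have h1 := ih (p + 1) q (by omega) (by omega)
        have h2 := ih p (q + 1) (by omega) (by omega)
        have h3 := hopp p q (by omega)
        rw [h1, h2] at h3
        exact eq_bot_iff.mpr (by simpa using h3)
    -- Lemma 2 : raise the G-index inside F p when p + r ≤ n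
    have L2 : ∀ k : ℕ, ∀ p q r : ℤ, (r - q).toNat ≤ k → p + r ≤ n →
        F p ⊓ G q ≤ F (p + 1) ⊔ (F p ⊓ G r) := by
      intro k
      induction k with
      | zero =>
        intro p q r hk hpr
        exact le_sup_of_le_right (inf_le_inf_left _ (hG (by omega)))
      | succ k ih =>
        intro p q r hk hpr
        rcases le_or_gt r q with hrq | hrq
        · exact le_sup_of_le_right (inf_le_inf_left _ (hG hrq))
        have hstep := hopp p q (by omega)
        have h2 := ih p (q + 1) r (by omega) hpr
        calc F p ⊓ G q ≤ (F (p + 1) ⊓ G q) ⊔ (F p ⊓ G (q + 1)) := hstep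
          _ ≤ F (p + 1) ⊔ (F p ⊓ G r) :=
            sup_le (le_sup_of_le_left inf_le_left) h2
    -- Lemma 3 : F p ⊔ G q = ⊤ for p + q ≤ n + 1
    have L3 : ∀ k : ℕ, ∀ p q : ℤ, (p - a₀).toNat ≤ k → p + q ≤ n + 1 →
        F p ⊔ G q = ⊤ := by
      intro k
      induction k with
      | zero =>
        intro p q hk hpq
        have hpa : p ≤ a₀ := by omega
        have hFp : F p = ⊤ := eq_top_iff.mpr (ha₀ ▸ hF hpa)
        simp [hFp]
      | succ k ih =>
        intro p q hk hpq
        rcases le_or_gt p a₀ with hpa | hpa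
        · have hFp : F p = ⊤ := eq_top_iff.mpr (ha₀ ▸ hF hpa)
          simp [hFp]
        have hprev : F (p - 1) ⊔ G q = ⊤ := ih (p - 1) q (by omega) (by omega)
        have hle : F (p - 1) ≤ F p ⊔ G q := by
          have h2 := L2 (n + 1 - p - b₀).toNat (p - 1) b₀ (n + 1 - p) le_rfl (by omega)
          rw [hb₀, inf_top_eq] at h2
          have hpp : p - 1 + 1 = p := by ring
          rw [hpp] at h2
          refine h2.trans (sup_le_sup_left ?_ _)
          exact inf_le_right.trans (hG (by omega))
        rw [eq_top_iff, ← hprev]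
        exact sup_le (hle) le_sup_right
    intro p q hpq
    constructor
    · exact disjoint_iff.mpr
        (L1 ((a - p).toNat + (b - q).toNat) p q le_rfl (by omega))
    · exact codisjoint_iff.mpr (L3 (p - a₀).toNat p q le_rfl (by omega))
  · intro hcompl p q hpq
    rcases lt_or_gt_of_ne hpq with hlt | hgt
    · -- p + q < n : use the splitting A = F (p+1) ⊕ G (n - p)
      have hc := hcompl (p + 1) (n - p) (by ring)
      intro x hx
      obtain ⟨hxF, hxG⟩ := hx
      have hxtop : x ∈ F (p + 1) ⊔ G (n - p) := by
        rw [hc.codisjoint.eq_top]; trivial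
      obtain ⟨y, hy, z, hz, hxyz⟩ := Submodule.mem_sup.mp hxtop
      have hzFp : z ∈ F p := by
        have : z = x - y := by rw [← hxyz]; abel
        rw [this]
        exact sub_mem hxF (hF (by omega) hy)
      have hzG : z ∈ G (q + 1) := hG (by omega) hz
      have hyG : y ∈ G q := by
        have : y = x - z := by rw [← hxyz]; abel
        rw [this]
        exact sub_mem hxG (hG (by omega) hzG)
      exact Submodule.mem_sup.mpr ⟨y, ⟨hy, hyG⟩, z, ⟨hzFp, hzG⟩, hxyz⟩
    · -- p + q > n : F p ⊓ G q = ⊥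
      have hc := hcompl p (n + 1 - p) (by ring)
      have h1 : F p ⊓ G q ≤ F p ⊓ G (n + 1 - p) :=
        inf_le_inf_left _ (hG (by omega))
      rw [hc.disjoint.eq_bot] at h1
      exact h1.trans bot_le
end

section
/- Let F and G be two finite decreasing n-opposite filtrations on a vector space A (Gr_F^p Gr_G^q A = 0 for p+q ≠ n). Set A^{p,q} = F^p(A) ∩ G^q(A) for p+q = n. Then A = ⊕_{p+q=n} A^{p,q}, and moreover F^p(A) = ⊕_{p'≥p} A^{p',n−p'} and G^q(A) = ⊕_{q'≥q} A^{n−q',q'}. -/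
section aux

variable {K A : Type*} [Field K] [AddCommGroup A] [Module K A]

/-- If `p + q > n`, then `F p ⊓ G q = ⊥`. -/
lemma aux_zero (F G : ℤ → Submodule K A) (hF : Antitone F) (hG : Antitone G)
    (bF bG : ℤ) (hbF : F bF = ⊥) (hbG : G bG = ⊥) (n : ℤ)
    (hopp : ∀ p q : ℤ, p + q ≠ n →
      F p ⊓ G q ≤ (F (p + 1) ⊓ G q) ⊔ (F p ⊓ G (q + 1))) :
    ∀ p q : ℤ, n < p + q → F p ⊓ G q = ⊥ := by
  suffices h : ∀ k : ℕ, ∀ p q : ℤ, (bF - p).toNat + (bG - q).toNat ≤ k →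
      n < p + q → F p ⊓ G q = ⊥ by
    intro p q hpq
    exact h ((bF - p).toNat + (bG - q).toNat) p q le_rfl hpq
  intro k
  induction k with
  | zero =>
    intro p q hk _
    have hp : bF ≤ p := by omega
    have : F p ≤ ⊥ := hbF ▸ hF hp
    rw [eq_bot_iff]
    exact le_trans inf_le_left this
  | succ k ih =>
    intro p q hk hn
    by_cases hp : bF ≤ p
    · have : F p ≤ ⊥ := hbF ▸ hF hp
      rw [eq_bot_iff]; exact le_trans inf_le_left this
    by_cases hq : bG ≤ q
    · have : G q ≤ ⊥ := hbG ▸ hG hq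
      rw [eq_bot_iff]; exact le_trans inf_le_right this
    have h1 : F (p + 1) ⊓ G q = ⊥ := ih (p + 1) q (by omega) (by omega)
    have h2 : F p ⊓ G (q + 1) = ⊥ := ih p (q + 1) (by omega) (by omega)
    rw [eq_bot_iff]
    calc F p ⊓ G q ≤ (F (p + 1) ⊓ G q) ⊔ (F p ⊓ G (q + 1)) :=
          hopp p q (by omega)
      _ ≤ ⊥ := by rw [h1, h2]; simp

/-- For `p + q ≤ n`, `F p ⊓ G q ≤ (F (p+1) ⊓ G q) ⊔ (F p ⊓ G (n - p))`. -/
lemma aux_one (F G : ℤ → Submodule K A) (hG : Antitone G) (n : ℤ)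
    (hopp : ∀ p q : ℤ, p + q ≠ n →
      F p ⊓ G q ≤ (F (p + 1) ⊓ G q) ⊔ (F p ⊓ G (q + 1))) :
    ∀ p q : ℤ, p + q ≤ n → F p ⊓ G q ≤ (F (p + 1) ⊓ G q) ⊔ (F p ⊓ G (n - p)) := by
  suffices h : ∀ k : ℕ, ∀ p q : ℤ, (n - p - q).toNat ≤ k → p + q ≤ n →
      F p ⊓ G q ≤ (F (p + 1) ⊓ G q) ⊔ (F p ⊓ G (n - p)) by
    intro p q hpq
    exact h (n - p - q).toNat p q le_rfl hpq
  intro k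
  induction k with
  | zero =>
    intro p q hk hpq
    have : q = n - p := by omega
    subst this
    exact le_sup_right
  | succ k ih =>
    intro p q hk hpq
    by_cases heq : q = n - p
    · subst heq; exact le_sup_right
    have hlt : p + q < n := by omega
    calc F p ⊓ G q ≤ (F (p + 1) ⊓ G q) ⊔ (F p ⊓ G (q + 1)) := hopp p q (by omega)
      _ ≤ (F (p + 1) ⊓ G q) ⊔ ((F (p + 1) ⊓ G (q + 1)) ⊔ (F p ⊓ G (n - p))) :=
          sup_le_sup_left (ih p (q + 1) (by omega) (by omega)) _
      _ ≤ (F (p + 1) ⊓ G q) ⊔ (F p ⊓ G (n - p)) := by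
          apply sup_le le_sup_left
          apply sup_le _ le_sup_right
          exact le_trans (inf_le_inf_left _ (hG (by omega))) le_sup_left

/-- Spanning: `F p ≤ ⨆ p' ≥ p, F p' ⊓ G (n - p')`. -/
lemma aux_span (F G : ℤ → Submodule K A) (hF : Antitone F) (hG : Antitone G)
    (bF : ℤ) (hbF : F bF = ⊥) (aG : ℤ) (haG : G aG = ⊤) (n : ℤ)
    (hopp : ∀ p q : ℤ, p + q ≠ n →
      F p ⊓ G q ≤ (F (p + 1) ⊓ G q) ⊔ (F p ⊓ G (q + 1))) :
    ∀ p : ℤ, F p ≤ ⨆ p' : ℤ, ⨆ _ : p ≤ p', F p' ⊓ G (n - p') := by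
  suffices h : ∀ k : ℕ, ∀ p : ℤ, (bF - p).toNat ≤ k →
      F p ≤ ⨆ p' : ℤ, ⨆ _ : p ≤ p', F p' ⊓ G (n - p') by
    intro p; exact h (bF - p).toNat p le_rfl
  intro k
  induction k with
  | zero =>
    intro p hk
    have hp : bF ≤ p := by omega
    have : F p ≤ ⊥ := hbF ▸ hF hp
    exact le_trans this bot_le
  | succ k ih =>
    intro p hk
    by_cases hp : bF ≤ p
    · have : F p ≤ ⊥ := hbF ▸ hF hp
      exact le_trans this bot_le
    -- pick q = min aG (n - p), so G q = ⊤ and q ≤ n - p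
    set q : ℤ := min aG (n - p) with hq
    have hGq : G q = ⊤ := top_le_iff.mp (haG ▸ hG (min_le_left _ _))
    have step : F p ≤ F (p + 1) ⊔ (F p ⊓ G (n - p)) := by
      have := aux_one F G hG n hopp p q (by omega)
      calc F p = F p ⊓ G q := by rw [hGq, inf_top_eq]
        _ ≤ (F (p + 1) ⊓ G q) ⊔ (F p ⊓ G (n - p)) := this
        _ ≤ F (p + 1) ⊔ (F p ⊓ G (n - p)) := sup_le_sup_right inf_le_left _
    refine le_trans step (sup_le ?_ ?_)
    · refine le_trans (ih (p + 1) (by omega)) ?_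
      refine iSup_le fun p' => iSup_le fun hp' => ?_
      exact le_iSup_of_le p' (le_iSup_of_le (by omega) le_rfl)
    · exact le_iSup_of_le p (le_iSup_of_le le_rfl le_rfl)

end aux

/-- Let `F` and `G` be finite decreasing `n`-opposite filtrations on a finite-dimensional
vector space `A` and set `A^{p,q} = F^p(A) ∩ G^q(A)` for `p + q = n`.  Then
`A = ⊕_{p+q=n} A^{p,q}`, `F^p(A) = ⊕_{p'≥p} A^{p',n-p'}` and
`G^q(A) = ⊕_{q'≥q} A^{n-q',q'}`. -/
theorem stmt7 (K A : Type*) [Field K] [AddCommGroup A] [Module K A]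
    [FiniteDimensional K A]
    (F G : ℤ → Submodule K A) (hF : Antitone F) (hG : Antitone G)
    (hFtop : ∃ a, F a = ⊤) (hFbot : ∃ a, F a = ⊥)
    (hGtop : ∃ a, G a = ⊤) (hGbot : ∃ a, G a = ⊥) (n : ℤ)
    (hopp : ∀ p q : ℤ, p + q ≠ n →
      F p ⊓ G q ≤ (F (p + 1) ⊓ G q) ⊔ (F p ⊓ G (q + 1))) :
    DirectSum.IsInternal (fun p : ℤ => F p ⊓ G (n - p)) ∧
    (∀ p : ℤ, F p = ⨆ p' : ℤ, ⨆ _ : p ≤ p', F p' ⊓ G (n - p')) ∧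
    (∀ q : ℤ, G q = ⨆ q' : ℤ, ⨆ _ : q ≤ q', F (n - q') ⊓ G q') := by
  obtain ⟨aF, haF⟩ := hFtop
  obtain ⟨bF, hbF⟩ := hFbot
  obtain ⟨aG, haG⟩ := hGtop
  obtain ⟨bG, hbG⟩ := hGbot
  have hzero := aux_zero F G hF hG bF bG hbF hbG n hopp
  -- the symmetric opposedness hypothesis
  have hopp' : ∀ p q : ℤ, p + q ≠ n →
      G p ⊓ F q ≤ (G (p + 1) ⊓ F q) ⊔ (G p ⊓ F (q + 1)) := by
    intro p q hpq
    have := hopp q p (by omega)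
    rw [inf_comm (G p) (F q), inf_comm (G (p+1)) (F q), inf_comm (G p) (F (q+1)),
      sup_comm]
    exact this
  have hFspan : ∀ p : ℤ, F p = ⨆ p' : ℤ, ⨆ _ : p ≤ p', F p' ⊓ G (n - p') := by
    intro p
    refine le_antisymm (aux_span F G hF hG bF hbF aG haG n hopp p) ?_
    refine iSup_le fun p' => iSup_le fun hp' => ?_
    exact le_trans inf_le_left (hF hp')
  have hGspan : ∀ q : ℤ, G q = ⨆ q' : ℤ, ⨆ _ : q ≤ q', F (n - q') ⊓ G q' := by
    intro q
    have h := aux_span G F hG hF bG hbG aF haF n hopp' q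
    refine le_antisymm ?_ ?_
    · refine le_trans h ?_
      refine iSup_le fun q' => iSup_le fun hq' => ?_
      refine le_iSup_of_le q' (le_iSup_of_le hq' ?_)
      rw [inf_comm]
    · refine iSup_le fun q' => iSup_le fun hq' => ?_
      exact le_trans inf_le_right (hG hq')
  refine ⟨?_, hFspan, hGspan⟩
  rw [DirectSum.isInternal_submodule_iff_iSupIndep_and_iSup_eq_top]
  constructor
  · -- independence
    intro p
    rw [disjoint_iff]
    have hle : (⨆ (j : ℤ) (_ : j ≠ p), F j ⊓ G (n - j)) ≤ F (p + 1) ⊔ G (n - p + 1) := by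
      refine iSup_le fun j => iSup_le fun hj => ?_
      rcases lt_or_gt_of_ne hj with h | h
      · -- j < p, so n - j ≥ n - p + 1
        exact le_trans inf_le_right (le_trans (hG (by omega)) le_sup_right)
      · exact le_trans inf_le_left (le_trans (hF (by omega)) le_sup_left)
    rw [eq_bot_iff]
    refine le_trans (inf_le_inf_left _ hle) ?_
    intro x hx
    obtain ⟨hx1, hx2⟩ := hx
    obtain ⟨hxF, hxG⟩ := hx1
    obtain ⟨y, hy, z, hz, hyz⟩ := Submodule.mem_sup.mp hx2
    have hzF : z ∈ F p := by
      have : z = x - y := by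
        have := hyz; rw [← this]; abel
      rw [this]
      exact sub_mem hxF (hF (by omega) hy)
    have hz0 : z = 0 := by
      have : z ∈ F p ⊓ G (n - p + 1) := ⟨hzF, hz⟩
      rw [hzero p (n - p + 1) (by omega)] at this
      exact this
    have hx0 : x ∈ F (p + 1) ⊓ G (n - p) := by
      refine ⟨?_, hxG⟩
      rw [← hyz, hz0, add_zero]; exact hy
    rw [hzero (p + 1) (n - p) (by omega)] at hx0
    exact hx0
  · -- spanning
    rw [eq_top_iff, ← haF]
    refine le_trans (aux_span F G hF hG bF hbF aG haG n hopp aF) ?_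
    exact iSup_le fun p' => iSup_le fun _ => le_iSup_of_le p' le_rfl
end

section
/- Let K be a cochain complex of vector spaces with a biregular decreasing filtration F by subcomplexes. The spectral sequence of (K,F) degenerates at E₁ (i.e. E₁ = E_∞) if and only if every differential d : K^i → K^{i+1} is strictly compatible with F, i.e. d(K^i) ∩ F^p K^{i+1} = d(F^p K^i) for all p, i. -/
/-- Let `K` be a cochain complex of vector spaces (given by `d i j : K i → K j`, zero
unless `j = i+1`, with `d ∘ d = 0`) with a biregular decreasing filtration `F` by
subcomplexes.  With `Z_r^{p,n} = F^p K^n ∩ d⁻¹(F^{p+r} K^{n+1})` and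
`B_r^{p,n} = F^{p+1} K^n + d(F^{p-r+1} K^{n-1})`, the spectral sequence of `(K,F)`
degenerates at `E₁` (all differentials `d_r`, `r ≥ 1`, vanish, i.e.
`d(Z_r^{p,n}) ⊆ B_r ∩ Z_r` at the `(p+r, n+1)` spot) if and only if every differential
`d : K^n → K^{n+1}` is strictly compatible with `F`, i.e.
`d(K^n) ∩ F^p K^{n+1} = d(F^p K^n)` for all `p, n`. -/
theorem stmt11 (𝕜 : Type*) [Field 𝕜] (Kc : ℤ → Type*)
    [∀ n, AddCommGroup (Kc n)] [∀ n, Module 𝕜 (Kc n)]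
    (d : ∀ i j : ℤ, Kc i →ₗ[𝕜] Kc j)
    (hd0 : ∀ i j : ℤ, j ≠ i + 1 → d i j = 0)
    (hdd : ∀ i j k : ℤ, (d j k).comp (d i j) = 0)
    (F : ℤ → ∀ n : ℤ, Submodule 𝕜 (Kc n))
    (hFmono : ∀ p n, F (p + 1) n ≤ F p n)
    (hFd : ∀ p n m, Submodule.map (d n m) (F p n) ≤ F p m)
    (hFtop : ∀ n, ∃ a, F a n = ⊤) (hFbot : ∀ n, ∃ b, F b n = ⊥) :
    let Z : ℤ → ℤ → ∀ n : ℤ, Submodule 𝕜 (Kc n) := fun r p n =>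
      F p n ⊓ Submodule.comap (d n (n + 1)) (F (p + r) (n + 1))
    let B : ℤ → ℤ → ∀ n : ℤ, Submodule 𝕜 (Kc n) := fun r p n =>
      F (p + 1) n ⊔ Submodule.map (d (n - 1) n) (F (p - r + 1) (n - 1))
    (∀ r : ℤ, 1 ≤ r → ∀ p n : ℤ,
        Submodule.map (d n (n + 1)) (Z r p n) ≤
          B r (p + r) (n + 1) ⊓ Z r (p + r) (n + 1)) ↔
    (∀ p n : ℤ,
        Submodule.map (d n (n + 1)) (F p n) =
          LinearMap.range (d n (n + 1)) ⊓ F p (n + 1)) := by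
  intro Z B
  have hmono : ∀ (n p q : ℤ), p ≤ q → F q n ≤ F p n := by
    intro n p q hpq
    obtain ⟨m, rfl⟩ : ∃ m : ℕ, q = p + m := ⟨(q - p).toNat, by omega⟩
    clear hpq
    induction m with
    | zero => simp
    | succ m ih =>
      refine le_trans ?_ ih
      have := hFmono (p + m) n
      rwa [show ((p:ℤ) + ↑(m+1)) = p + ↑m + 1 from by push_cast; ring]
  constructor
  · intro hdeg p n
    -- key lemma A
    have keyA : ∀ (p n : ℤ) (k : ℕ) (x : Kc n), x ∈ F (p - k) n →
        d n (n+1) x ∈ F p (n+1) →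
        d n (n+1) x ∈ Submodule.map (d n (n+1)) (F p n) ⊔
          (LinearMap.range (d n (n+1)) ⊓ F (p+1) (n+1)) := by
      intro p n k
      induction k with
      | zero =>
        intro x hx hdx
        exact Submodule.mem_sup_left ⟨x, by simpa using hx, rfl⟩
      | succ k ih =>
        intro x hx hdx
        have hZ : x ∈ Z ((k:ℤ)+1) (p - (k+1)) n := by
          simp only [Z, Submodule.mem_inf, Submodule.mem_comap]
          constructor
          · exact_mod_cast hx
          · rw [show p - ((k:ℤ)+1) + ((k:ℤ)+1) = p from by ring]
            exact hdx
        have hB0 := hdeg ((k:ℤ)+1) (by omega) (p - (k+1)) n ⟨x, hZ, rfl⟩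
        rw [Submodule.mem_inf] at hB0
        have hB := hB0.1
        simp only [B] at hB
        rw [show p - ((k:ℤ)+1) + ((k:ℤ)+1) = p from by ring,
          show (n:ℤ)+1-1 = n from by ring,
          show p - ((k:ℤ)+1) + 1 = p - (k:ℤ) from by ring] at hB
        rcases Submodule.mem_sup.mp hB with ⟨f, hf, v, hv, hsum⟩
        rcases hv with ⟨x', hx', rfl⟩
        have hdx' : d n (n+1) x' ∈ F p (n+1) := by
          have : d n (n+1) x' = d n (n+1) x - f := by
            rw [← hsum]; abel
          rw [this]
          exact Submodule.sub_mem _ hdx (hFmono p (n+1) hf)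
        have h1 := ih x' hx' hdx'
        have hfr : f ∈ LinearMap.range (d n (n+1)) ⊓ F (p+1) (n+1) := by
          refine ⟨⟨x - x', ?_⟩, hf⟩
          rw [map_sub]
          rw [← hsum]; abel
        have : d n (n+1) x = d n (n+1) x' + f := by rw [← hsum]; abel
        rw [this]
        exact Submodule.add_mem _ h1 (Submodule.mem_sup_right hfr)
    -- key lemma B : strictness
    have keyB : ∀ (p n : ℤ), LinearMap.range (d n (n+1)) ⊓ F p (n+1) ≤
        Submodule.map (d n (n+1)) (F p n) := by
      intro p n
      obtain ⟨b, hb⟩ := hFbot (n+1)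
      have claim : ∀ k : ℕ, ∀ p : ℤ, b - k ≤ p →
          LinearMap.range (d n (n+1)) ⊓ F p (n+1) ≤
            Submodule.map (d n (n+1)) (F p n) := by
        intro k
        induction k with
        | zero =>
          intro p hp y hy
          have : y ∈ F b (n+1) := hmono (n+1) b p (by omega) hy.2
          rw [hb] at this
          simp only [Submodule.mem_bot] at this
          rw [this]
          exact Submodule.zero_mem _
        | succ k ih =>
          intro p hp y hy
          obtain ⟨⟨x, rfl⟩, hyF⟩ := hy
          obtain ⟨a, ha⟩ := hFtop n
          set k' : ℕ := (p - a).toNat with hk'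
          have hxq : x ∈ F (p - k') n := by
            refine hmono n (p - k') a (by omega) ?_
            rw [ha]; trivial
          have h1 := keyA p n k' x hxq hyF
          rcases Submodule.mem_sup.mp h1 with ⟨u, hu, v, hv, hsum⟩
          have hv' : v ∈ Submodule.map (d n (n+1)) (F (p+1) n) :=
            ih (p+1) (by omega) hv
          rw [← hsum]
          exact Submodule.add_mem _ hu
            (Submodule.map_mono (hmono n p (p+1) (by omega)) hv')
      exact claim (b - p).toNat p (by omega)
    apply le_antisymm
    · rintro y ⟨x, hx, rfl⟩
      exact ⟨⟨x, rfl⟩, hFd p n (n+1) ⟨x, hx, rfl⟩⟩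
    · exact keyB p n
  · intro hstrict r hr p n
    rintro y ⟨x, hx, rfl⟩
    simp only [Z, Submodule.mem_inf, Submodule.mem_comap] at hx
    obtain ⟨hx1, hx2⟩ := hx
    rw [Submodule.mem_inf]
    constructor
    · simp only [B]
      apply Submodule.mem_sup_right
      rw [show (n:ℤ)+1-1 = n from by ring,
        show p + r - r + 1 = p + 1 from by ring]
      have h1 : d n (n+1) x ∈ LinearMap.range (d n (n+1)) ⊓ F (p+r) (n+1) :=
        ⟨⟨x, rfl⟩, hx2⟩
      rw [← hstrict (p+r) n] at h1
      exact Submodule.map_mono (hmono n (p+1) (p+r) (by omega)) h1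
    · simp only [Z]
      rw [Submodule.mem_inf, Submodule.mem_comap]
      refine ⟨hx2, ?_⟩
      have h0 : d (n+1) (n+1+1) (d n (n+1) x) = 0 := by
        have := LinearMap.congr_fun (hdd n (n+1) (n+1+1)) x
        simpa using this
      rw [h0]
      exact Submodule.zero_mem _
end

section
/- Let H be a mixed Hodge structure with weight filtration W on H_ℚ and Hodge filtration F on H_ℂ. Define I^{p,q} = (F^p ∩ W_{p+q}) ∩ (F̄^q ∩ W_{p+q} + Σ_{i≥2} F̄^{q−i+1} ∩ W_{p+q−i}) in H_ℂ. Then the projection W_{p+q} → Gr^W_{p+q} H_ℂ induces an isomorphism I^{p,q} ≅ H^{p,q}(Gr^W_{p+q}), and moreover W_n ⊗ ℂ = ⊕_{p+q≤n} I^{p,q} and F^p = ⊕_{p'≥p, q'} I^{p',q'}. -/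
set_option linter.unusedSectionVars false

namespace Stmt18Aux

variable {H : Type*} [AddCommGroup H] [Module ℂ H]

/-- `gp W F m p` is the image of `F p` in `Gr^W_m`, modelled as the submodule
`(F p ⊓ W m) ⊔ W (m-1)` lying between `W (m-1)` and `W m`. -/
def gp (W F : ℤ → Submodule ℂ H) (m p : ℤ) : Submodule ℂ H := (F p ⊓ W m) ⊔ W (m - 1)

section Basic

variable (W F Fb : ℤ → Submodule ℂ H) (m : ℤ)

lemma gp_le_W (hW : Monotone W) (p : ℤ) : gp W F m p ≤ W m :=
  sup_le inf_le_right (hW (by linarith))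

lemma W_le_gp (p : ℤ) : W (m - 1) ≤ gp W F m p := le_sup_right

lemma gp_anti (hF : Antitone F) : Antitone (gp W F m) := fun _ _ h =>
  sup_le_sup_right (inf_le_inf_right _ (hF h)) _

lemma gp_of_top (hW : Monotone W) {p : ℤ} (h : F p = ⊤) : gp W F m p = W m := by
  rw [gp, h, top_inf_eq, sup_eq_left.mpr (hW (by linarith))]

lemma gp_of_bot {p : ℤ} (h : F p = ⊥) : gp W F m p = W (m - 1) := by
  rw [gp, h, bot_inf_eq, bot_sup_eq]

end Basic

section Core

variable {W F Fb : ℤ → Submodule ℂ H} {m : ℤ}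
variable (hW : Monotone W) (hF : Antitone F) (hFb : Antitone Fb)
variable {tF bF tFb bFb : ℤ}
variable (htF : F tF = ⊤) (hbF : F bF = ⊥) (htFb : Fb tFb = ⊤) (hbFb : Fb bFb = ⊥)
variable (hHS : ∀ m p q : ℤ, p + q ≠ m →
    gp W F m p ⊓ gp W Fb m q ≤
      (gp W F m (p + 1) ⊓ gp W Fb m q) ⊔ (gp W F m p ⊓ gp W Fb m (q + 1)))

include hF hbF hFb hbFb hHS in
/-- (★★): `F^p Gr_m ⊓ F̄^t Gr_m ≤ W (m-1)` when `p + t > m`. -/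
lemma L1 : ∀ p t : ℤ, m < p + t → gp W F m p ⊓ gp W Fb m t ≤ W (m - 1) := by
  have key : ∀ k : ℕ, ∀ p t : ℤ, bF + bFb ≤ p + t + k → m < p + t →
      gp W F m p ⊓ gp W Fb m t ≤ W (m - 1) := by
    intro k
    induction k with
    | zero =>
      intro p t hk _
      rcases le_or_gt bF p with hp | hp
      · rw [gp_of_bot W F m (le_bot_iff.mp (hbF ▸ hF hp))]; exact inf_le_left
      · rw [gp_of_bot W Fb m (le_bot_iff.mp (hbFb ▸ hFb (by omega)))]; exact inf_le_right
    | succ k ih =>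
      intro p t hk hm
      rcases le_or_gt bF p with hp | hp
      · rw [gp_of_bot W F m (le_bot_iff.mp (hbF ▸ hF hp))]; exact inf_le_left
      rcases le_or_gt bFb t with ht | ht
      · rw [gp_of_bot W Fb m (le_bot_iff.mp (hbFb ▸ hFb ht))]; exact inf_le_right
      refine (hHS m p t (by omega)).trans (sup_le ?_ ?_)
      · exact ih (p + 1) t (by omega) (by omega)
      · exact ih p (t + 1) (by omega) (by omega)
  intro p t hm
  exact key (bF + bFb - p - t).toNat p t (by omega) hm

include hW hF hFb htFb hHS in
/-- One-step descent: `F^r Gr_m ≤ (F^r ⊓ F̄^{m-r}) Gr_m ⊔ F^{r+1} Gr_m`. -/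
lemma descE (r : ℤ) :
    gp W F m r ≤ (gp W F m r ⊓ gp W Fb m (m - r)) ⊔ gp W F m (r + 1) := by
  have key : ∀ k : ℕ, ∀ t : ℤ, m - r ≤ t + k →
      gp W F m r ⊓ gp W Fb m t ≤ (gp W F m r ⊓ gp W Fb m (m - r)) ⊔ gp W F m (r + 1) := by
    intro k
    induction k with
    | zero =>
      intro t ht
      exact le_sup_of_le_left (inf_le_inf_left _ (gp_anti W Fb m hFb (by omega)))
    | succ k ih =>
      intro t ht
      rcases le_or_gt (m - r) t with h | h
      · exact le_sup_of_le_left (inf_le_inf_left _ (gp_anti W Fb m hFb h))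
      refine (hHS m r t (by omega)).trans (sup_le ?_ ?_)
      · exact le_sup_of_le_right inf_le_left
      · exact ih (t + 1) (by omega)
  set t₀ := min tFb (m - r) with ht₀
  have h1 : gp W Fb m t₀ = W m :=
    gp_of_top W Fb m hW (top_le_iff.mp (htFb ▸ hFb (min_le_left _ _)))
  have h2 : gp W F m r ⊓ gp W Fb m t₀ = gp W F m r := by
    rw [h1, inf_eq_left.mpr (gp_le_W W F m hW r)]
  calc gp W F m r = gp W F m r ⊓ gp W Fb m t₀ := h2.symm
    _ ≤ _ := key (m - r - t₀).toNat t₀ (by omega)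

include hW hF hFb hbF htFb hHS in
/-- Span: `F^r Gr_m ≤ ⨆_{p' ≥ r} (F^{p'} ⊓ F̄^{m-p'}) Gr_m`. -/
lemma span3 (r : ℤ) :
    gp W F m r ≤ ⨆ p' : ℤ, ⨆ _ : r ≤ p', gp W F m p' ⊓ gp W Fb m (m - p') := by
  have key : ∀ k : ℕ, ∀ r : ℤ, bF ≤ r + k →
      gp W F m r ≤ ⨆ p' : ℤ, ⨆ _ : r ≤ p', gp W F m p' ⊓ gp W Fb m (m - p') := by
    intro k
    induction k with
    | zero =>
      intro r hr
      have : gp W F m r = W (m - 1) := gp_of_bot W F m (le_bot_iff.mp (hbF ▸ hF (by omega)))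
      rw [this]
      refine le_trans ?_ (le_iSup₂ (f := fun p' (_ : r ≤ p') => gp W F m p' ⊓ gp W Fb m (m - p'))
        r le_rfl)
      exact le_inf (W_le_gp W F m r) (W_le_gp W Fb m (m - r))
    | succ k ih =>
      intro r hr
      rcases le_or_gt bF r with h | h
      · have : gp W F m r = W (m - 1) := gp_of_bot W F m (le_bot_iff.mp (hbF ▸ hF h))
        rw [this]
        refine le_trans ?_ (le_iSup₂ (f := fun p' (_ : r ≤ p') => gp W F m p' ⊓ gp W Fb m (m - p'))
          r le_rfl)
        exact le_inf (W_le_gp W F m r) (W_le_gp W Fb m (m - r))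
      refine (descE hW hF hFb htFb hHS r).trans (sup_le ?_ ?_)
      · exact le_iSup₂ (f := fun p' (_ : r ≤ p') => gp W F m p' ⊓ gp W Fb m (m - p')) r le_rfl
      · refine (ih (r + 1) (by omega)).trans (iSup₂_le fun p' hp' => ?_)
        exact le_iSup₂ (f := fun p' (_ : r ≤ p') => gp W F m p' ⊓ gp W Fb m (m - p')) p' (by omega)
  exact key (bF - r).toNat r (by omega)

include hW hF hFb htF hbF htFb hHS in
/-- (★): `W m ≤ F^{m-t+1} Gr_m ⊔ F̄^t Gr_m`. -/
lemma star (t : ℤ) : W m ≤ gp W F m (m - t + 1) ⊔ gp W Fb m t := by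
  have h0 : W m = gp W F m tF := (gp_of_top W F m hW htF).symm
  rw [h0]
  refine (span3 hW hF hFb hbF htFb hHS tF).trans (iSup₂_le fun p' _ => ?_)
  rcases le_or_gt (m - t + 1) p' with h | h
  · exact le_sup_of_le_left (inf_le_left.trans (gp_anti W F m hF h))
  · exact le_sup_of_le_right (inf_le_right.trans (gp_anti W Fb m hFb (by omega)))

include hF hFb hbF hbFb hHS in
/-- Independence in `Gr_m`: a class in `H^{p,q}` lying in `F^{p+1}-part + F̄^{q+1}-part`
vanishes. -/
lemma grIndep {p q : ℤ} (hpq : p + q = m) :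
    (gp W F m p ⊓ gp W Fb m q) ⊓ (gp W F m (p + 1) ⊔ gp W Fb m (q + 1)) ≤ W (m - 1) := by
  intro x hx
  obtain ⟨hx1, hx2⟩ := hx
  obtain ⟨u, hu, v, hv, huv⟩ := Submodule.mem_sup.mp hx2
  have hxu : x - u ∈ gp W F m p ⊓ gp W Fb m (q + 1) := by
    constructor
    · exact sub_mem hx1.1 (gp_anti W F m hF (by omega) hu)
    · have : x - u = v := by rw [← huv]; abel
      rw [this]; exact hv
  have h1 : x - u ∈ W (m - 1) := L1 hF hFb hbF hbFb hHS p (q + 1) (by omega) hxu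
  have hxF : x ∈ gp W F m (p + 1) := by
    have : x = u + (x - u) := by abel
    rw [this]
    exact add_mem hu (W_le_gp W F m (p + 1) h1)
  exact L1 hF hFb hbF hbFb hHS (p + 1) q (by omega) ⟨hxF, hx1.2⟩

end Core

/-- Deligne's subspace `I^{p,q}`. -/
def dI (W F Fb : ℤ → Submodule ℂ H) (p q : ℤ) : Submodule ℂ H :=
  (F p ⊓ W (p + q)) ⊓
    ((Fb q ⊓ W (p + q)) ⊔ ⨆ i : ℤ, ⨆ _ : 2 ≤ i, Fb (q - i + 1) ⊓ W (p + q - i))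

section DI

variable {W F Fb : ℤ → Submodule ℂ H}
variable (hW : Monotone W) (hF : Antitone F) (hFb : Antitone Fb)
variable {aW : ℤ} (haW : W aW = ⊥)
variable {tF bF tFb bFb : ℤ}
variable (htF : F tF = ⊤) (hbF : F bF = ⊥) (htFb : Fb tFb = ⊤) (hbFb : Fb bFb = ⊥)
variable (hHS : ∀ m p q : ℤ, p + q ≠ m →
    gp W F m p ⊓ gp W Fb m q ≤
      (gp W F m (p + 1) ⊓ gp W Fb m q) ⊔ (gp W F m p ⊓ gp W Fb m (q + 1)))

include hW in
lemma tail_le (p q : ℤ) :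
    (⨆ i : ℤ, ⨆ _ : 2 ≤ i, Fb (q - i + 1) ⊓ W (p + q - i)) ≤ W (p + q - 2) :=
  iSup₂_le fun i hi => inf_le_right.trans (hW (by omega))

lemma dI_le_FW (p q : ℤ) : dI W F Fb p q ≤ F p ⊓ W (p + q) := inf_le_left

lemma dI_le_gpF (p q : ℤ) : dI W F Fb p q ≤ gp W F (p + q) p :=
  inf_le_left.trans le_sup_left

include hW in
lemma dI_le_gpFb (p q : ℤ) : dI W F Fb p q ≤ gp W Fb (p + q) q :=
  inf_le_right.trans
    (sup_le_sup_left ((tail_le hW p q).trans (hW (by omega))) _)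

include hW hF hFb haW hbF hbFb hHS in
lemma dI_inf_W (p q : ℤ) : dI W F Fb p q ⊓ W (p + q - 1) = ⊥ := by
  rw [eq_bot_iff]
  rintro x ⟨hxI, hxW⟩
  have main : ∀ d : ℕ, ∀ k : ℤ, 1 ≤ k → p + q - k ≤ aW + d → ∀ y : H, y ∈ F p →
      y ∈ W (p + q - k) →
      y ∈ (Fb (q - k + 1) ⊓ W (p + q - k)) ⊔
        (⨆ i : ℤ, ⨆ _ : k + 1 ≤ i, Fb (q - i + 1) ⊓ W (p + q - i)) → y = 0 := by
    intro d
    induction d with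
    | zero =>
      intro k hk hkd y _ hyW _
      have : y ∈ W aW := hW (by omega) hyW
      rw [haW] at this
      exact (Submodule.mem_bot ℂ).mp this
    | succ d ih =>
      intro k hk hkd y hyF hyW hyS
      obtain ⟨a, ha, z, hz, haz⟩ := Submodule.mem_sup.mp hyS
      have hz' : z ∈ W (p + q - k - 1) :=
        (iSup₂_le fun i (hi : k + 1 ≤ i) =>
          (inf_le_right.trans (hW (by omega)) :
            Fb (q - i + 1) ⊓ W (p + q - i) ≤ W (p + q - k - 1))) hz
      have hy1 : y ∈ gp W F (p + q - k) p := Submodule.mem_sup_left ⟨hyF, hyW⟩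
      have hy2 : y ∈ gp W Fb (p + q - k) (q - k + 1) := by
        rw [← haz]
        refine add_mem (Submodule.mem_sup_left ha) (Submodule.mem_sup_right ?_)
        have e : p + q - k - 1 = p + q - k - 1 := rfl
        exact hz'
      have hyW' : y ∈ W (p + q - k - 1) := by
        have := L1 hF hFb hbF hbFb hHS (m := p + q - k) p (q - k + 1) (by omega) ⟨hy1, hy2⟩
        exact this
      have ha' : a ∈ Fb (q - (k + 1) + 1) ⊓ W (p + q - (k + 1)) := by
        constructor
        · exact hFb (by omega) ha.1
        · have e : a = y - z := by rw [← haz]; abel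
          rw [e]
          have : y - z ∈ W (p + q - k - 1) := sub_mem hyW' hz'
          have e2 : p + q - (k + 1) = p + q - k - 1 := by ring
          rw [e2]; exact this
      have hzS : z ∈ (Fb (q - (k + 1) + 1) ⊓ W (p + q - (k + 1))) ⊔
          (⨆ i : ℤ, ⨆ _ : (k + 1) + 1 ≤ i, Fb (q - i + 1) ⊓ W (p + q - i)) := by
        have hle : (⨆ i : ℤ, ⨆ _ : k + 1 ≤ i, Fb (q - i + 1) ⊓ W (p + q - i)) ≤
            (Fb (q - (k + 1) + 1) ⊓ W (p + q - (k + 1))) ⊔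
              (⨆ i : ℤ, ⨆ _ : (k + 1) + 1 ≤ i, Fb (q - i + 1) ⊓ W (p + q - i)) := by
          refine iSup₂_le fun i (hi : k + 1 ≤ i) => ?_
          rcases eq_or_lt_of_le hi with hik | hik
          · refine le_sup_of_le_left ?_
            rw [← hik]
          · exact le_sup_of_le_right
              (le_iSup₂ (f := fun i (_ : (k + 1) + 1 ≤ i) => Fb (q - i + 1) ⊓ W (p + q - i))
                i (by omega))
        exact hle hz
      refine ih (k + 1) (by omega) (by omega) y hyF ?_ ?_
      · have e2 : p + q - (k + 1) = p + q - k - 1 := by ring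
        rw [e2]; exact hyW'
      · rw [← haz]
        exact add_mem (Submodule.mem_sup_left ha') hzS
  -- start the induction at k = 1
  obtain ⟨a, ha, z, hz, haz⟩ := Submodule.mem_sup.mp hxI.2
  have hz' : z ∈ W (p + q - 1) := (tail_le hW p q).trans (hW (by omega)) hz
  have hxmem : x ∈ (Fb (q - 1 + 1) ⊓ W (p + q - 1)) ⊔
      (⨆ i : ℤ, ⨆ _ : (1 : ℤ) + 1 ≤ i, Fb (q - i + 1) ⊓ W (p + q - i)) := by
    rw [← haz]
    refine add_mem (Submodule.mem_sup_left ?_) (Submodule.mem_sup_right ?_)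
    · constructor
      · rw [show q - 1 + 1 = q from by ring]; exact ha.1
      · have : a = x - z := by rw [← haz]; abel
        rw [this]; exact sub_mem hxW hz'
    · simpa [show (1 : ℤ) + 1 = 2 from by norm_num] using hz
  have h0 := Submodule.mem_bot ℂ (x := x)
  rw [Submodule.mem_bot]
  exact main (p + q - 1 - aW).toNat 1 le_rfl (by omega) x hxI.1.1 hxW hxmem

include hW hF hFb haW htF hbF htFb hbFb hHS in
set_option maxHeartbeats 1000000 in
lemma gp_le_dI_sup (p q : ℤ) :
    gp W F (p + q) p ⊓ gp W Fb (p + q) q ≤ dI W F Fb p q ⊔ W (p + q - 1) := by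
  set A : Submodule ℂ H :=
    (Fb q ⊓ W (p + q)) ⊔ ⨆ i : ℤ, ⨆ _ : 2 ≤ i, Fb (q - i + 1) ⊓ W (p + q - i) with hA
  have sur : ∀ d : ℕ, ∀ k : ℤ, 1 ≤ k → p + q - k ≤ aW + d → ∀ x : H, x ∈ F p →
      x ∈ W (p + q) → x ∈ A ⊔ W (p + q - k) →
      x ∈ dI W F Fb p q ⊔ (F p ⊓ W (p + q - 1)) := by
    intro d
    induction d with
    | zero =>
      intro k hk hkd x hxF hxW hxS
      have hWk : W (p + q - k) ≤ A := by
        refine le_trans (hW (show p + q - k ≤ aW by omega)) ?_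
        rw [haW]; exact bot_le
      have hle : A ⊔ W (p + q - k) ≤ A := sup_le le_rfl hWk
      have hxA : x ∈ A := hle hxS
      exact Submodule.mem_sup_left ⟨⟨hxF, hxW⟩, hxA⟩
    | succ d ih =>
      intro k hk hkd x hxF hxW hxS
      obtain ⟨c, hc, u, hu, hcu⟩ := Submodule.mem_sup.mp hxS
      -- decompose u using the purity of Gr at weight p+q-k
      have hustar : u ∈ gp W F (p + q - k) p ⊔ gp W Fb (p + q - k) (q - k + 1) := by
        have := star (m := p + q - k) hW hF hFb htF hbF htFb hHS (q - k + 1)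
        rw [show p + q - k - (q - k + 1) + 1 = p from by ring] at this
        exact this hu
      obtain ⟨u₁, hu₁, u₂, hu₂, hu12⟩ := Submodule.mem_sup.mp hustar
      obtain ⟨b, hb, w₁, hw₁, hbw⟩ := Submodule.mem_sup.mp hu₁
      obtain ⟨a, ha, w₂, hw₂, haw⟩ := Submodule.mem_sup.mp hu₂
      have haA : a ∈ A := by
        rcases eq_or_lt_of_le hk with hk1 | hk1
        · refine Submodule.mem_sup_left ?_
          constructor
          · rw [show q = q - k + 1 from by omega]; exact ha.1
          · exact hW (by omega) ha.2
        · refine Submodule.mem_sup_right ?_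
          have : Fb (q - k + 1) ⊓ W (p + q - k) ≤
              ⨆ i : ℤ, ⨆ _ : 2 ≤ i, Fb (q - i + 1) ⊓ W (p + q - i) :=
            le_iSup₂ (f := fun i (_ : (2:ℤ) ≤ i) => Fb (q - i + 1) ⊓ W (p + q - i)) k (by omega)
          exact this ha
      have hxb : x - b ∈ A ⊔ W (p + q - (k + 1)) := by
        have e : x - b = (c + a) + (w₁ + w₂) := by
          rw [← hcu, ← hu12, ← hbw, ← haw]; abel
        rw [e]
        refine add_mem (Submodule.mem_sup_left (add_mem hc haA)) (Submodule.mem_sup_right ?_)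
        rw [show p + q - (k + 1) = p + q - k - 1 from by ring]
        exact add_mem hw₁ hw₂
      have hxb2 : x - b ∈ dI W F Fb p q ⊔ (F p ⊓ W (p + q - 1)) :=
        ih (k + 1) (by omega) (by omega) (x - b) (sub_mem hxF hb.1)
          (sub_mem hxW (hW (by omega) hb.2)) hxb
      have : x = (x - b) + b := by abel
      rw [this]
      exact add_mem hxb2 (Submodule.mem_sup_right ⟨hb.1, hW (by omega) hb.2⟩)
  rintro x ⟨hx1, hx2⟩
  obtain ⟨f, hf, w, hw, hfw⟩ := Submodule.mem_sup.mp hx1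
  have hx2' : x ∈ (Fb q ⊓ W (p + q)) ⊔ W (p + q - 1) := hx2
  have hBA : (Fb q ⊓ W (p + q)) ⊔ W (p + q - 1) ≤ A ⊔ W (p + q - 1) :=
    sup_le_sup_right le_sup_left _
  have hxA : x ∈ A ⊔ W (p + q - 1) := hBA hx2'
  have hfA : f ∈ A ⊔ W (p + q - 1) := by
    have : f = x - w := by rw [← hfw]; abel
    rw [this]
    exact sub_mem hxA (Submodule.mem_sup_right hw)
  have hf2 : f ∈ dI W F Fb p q ⊔ (F p ⊓ W (p + q - 1)) :=
    sur (p + q - 1 - aW).toNat 1 le_rfl (by omega) f hf.1 hf.2 hfA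
  have hle3 : dI W F Fb p q ⊔ (F p ⊓ W (p + q - 1)) ≤ dI W F Fb p q ⊔ W (p + q - 1) :=
    sup_le_sup_left inf_le_right _
  have hf3 : f ∈ dI W F Fb p q ⊔ W (p + q - 1) := hle3 hf2
  rw [← hfw]
  exact add_mem hf3 (Submodule.mem_sup_right hw)

include hW hF hFb haW htF hbF htFb hbFb hHS in
lemma dI_sup_W (p q : ℤ) :
    dI W F Fb p q ⊔ W (p + q - 1) = gp W F (p + q) p ⊓ gp W Fb (p + q) q := by
  refine le_antisymm (sup_le (le_inf (dI_le_gpF p q) (dI_le_gpFb hW p q))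
    (le_inf le_sup_right le_sup_right)) (gp_le_dI_sup hW hF hFb haW htF hbF htFb hbFb hHS p q)

include hW hF hFb haW hbF hbFb hHS in
lemma dI_eq_bot_of_F {p q : ℤ} (hp : bF ≤ p) : dI W F Fb p q = ⊥ := by
  have h1 : dI W F Fb p q ≤ W (p + q - 1) :=
    (dI_le_gpF p q).trans (le_of_eq (gp_of_bot W F (p + q) (le_bot_iff.mp (hbF ▸ hF hp))))
  have h2 := dI_inf_W hW hF hFb haW hbF hbFb hHS p q
  rw [eq_bot_iff] at h2 ⊢
  exact le_trans (le_inf le_rfl h1) h2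

include hW hF hFb haW hbF hbFb hHS in
lemma dI_eq_bot_of_Fb {p q : ℤ} (hq : bFb ≤ q) : dI W F Fb p q = ⊥ := by
  have h1 : dI W F Fb p q ≤ W (p + q - 1) :=
    (dI_le_gpFb hW p q).trans (le_of_eq (gp_of_bot W Fb (p + q) (le_bot_iff.mp (hbFb ▸ hFb hq))))
  have h2 := dI_inf_W hW hF hFb haW hbF hbFb hHS p q
  rw [eq_bot_iff] at h2 ⊢
  exact le_trans (le_inf le_rfl h1) h2

include hW haW in
lemma dI_le_bot_of_W {p q : ℤ} (hpq : p + q ≤ aW) : dI W F Fb p q = ⊥ := by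
  rw [eq_bot_iff]
  refine ((dI_le_FW p q).trans inf_le_right).trans ?_
  refine (hW hpq).trans ?_
  rw [haW]

include hW hF hFb haW htF hbF htFb hbFb hHS in
lemma partB (n : ℤ) : W n = ⨆ p : ℤ, ⨆ q : ℤ, ⨆ _ : p + q ≤ n, dI W F Fb p q := by
  refine le_antisymm ?_ (iSup_le fun p => iSup_le fun q => iSup_le fun h =>
    ((dI_le_FW p q).trans inf_le_right).trans (hW h))
  have grspan : ∀ m : ℤ, W m ≤ (⨆ p' : ℤ, dI W F Fb p' (m - p')) ⊔ W (m - 1) := by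
    intro m
    refine (gp_of_top W F m hW htF).ge.trans
      ((span3 hW hF hFb hbF htFb hHS (m := m) tF).trans (iSup₂_le fun p' _ => ?_))
    have h := dI_sup_W hW hF hFb haW htF hbF htFb hbFb hHS p' (m - p')
    rw [show p' + (m - p') = m from by ring] at h
    rw [← h]
    exact sup_le_sup_right (le_iSup (fun r => dI W F Fb r (m - r)) p') _
  have main : ∀ d : ℕ, ∀ nn : ℤ, nn ≤ aW + d →
      W nn ≤ ⨆ p : ℤ, ⨆ q : ℤ, ⨆ _ : p + q ≤ nn, dI W F Fb p q := by
    intro d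
    induction d with
    | zero =>
      intro nn h
      refine le_trans (hW (show nn ≤ aW by omega)) ?_
      rw [haW]; exact bot_le
    | succ d ih =>
      intro nn h
      rcases le_or_gt nn (aW + d) with h' | h'
      · exact ih nn h'
      · refine (grspan nn).trans (sup_le ?_ ?_)
        · refine iSup_le fun p' => ?_
          exact le_iSup_of_le p' (le_iSup_of_le (nn - p')
            (le_iSup_of_le (show p' + (nn - p') ≤ nn by omega) le_rfl))
        · exact (ih (nn - 1) (by omega)).trans (iSup_le fun p => iSup_le fun q =>
            iSup_le fun hpq => le_iSup_of_le p (le_iSup_of_le q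
              (le_iSup_of_le (show p + q ≤ nn by omega) le_rfl)))
  exact main (n - aW).toNat n (by omega)

include hW hF hFb haW htF hbF htFb hbFb hHS in
lemma partD (p : ℤ) {bW : ℤ} (hbW : W bW = ⊤) :
    F p = ⨆ p' : ℤ, ⨆ _ : p ≤ p', ⨆ q' : ℤ, dI W F Fb p' q' := by
  have hge : (⨆ p' : ℤ, ⨆ _ : p ≤ p', ⨆ q' : ℤ, dI W F Fb p' q') ≤ F p :=
    iSup_le fun p' => iSup_le fun hp' => iSup_le fun q' =>
      ((dI_le_FW p' q').trans inf_le_left).trans (hF hp')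
  refine le_antisymm ?_ hge
  have main : ∀ d : ℕ, ∀ nn : ℤ, nn ≤ aW + d →
      F p ⊓ W nn ≤ ⨆ p' : ℤ, ⨆ _ : p ≤ p', ⨆ q' : ℤ, dI W F Fb p' q' := by
    intro d
    induction d with
    | zero =>
      intro nn h
      refine inf_le_right.trans (le_trans (hW (show nn ≤ aW by omega)) ?_)
      rw [haW]; exact bot_le
    | succ d ih =>
      intro nn h
      rcases le_or_gt nn (aW + d) with h' | h'
      · exact ih nn h'
      rintro x ⟨hxF, hxW⟩
      have hx1 : x ∈ gp W F nn p := Submodule.mem_sup_left ⟨hxF, hxW⟩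
      have hle : gp W F nn p ≤
          (⨆ p' : ℤ, ⨆ _ : p ≤ p', ⨆ q' : ℤ, dI W F Fb p' q') ⊔ W (nn - 1) := by
        refine (span3 hW hF hFb hbF htFb hHS (m := nn) p).trans (iSup₂_le fun p' hp' => ?_)
        have hd := dI_sup_W hW hF hFb haW htF hbF htFb hbFb hHS p' (nn - p')
        rw [show p' + (nn - p') = nn from by ring] at hd
        rw [← hd]
        refine sup_le_sup_right ?_ _
        exact le_iSup_of_le p' (le_iSup_of_le hp'
          (le_iSup_of_le (nn - p') le_rfl))
      obtain ⟨i, hi, w, hw, hiw⟩ := Submodule.mem_sup.mp (hle hx1)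
      have hwF : w ∈ F p := by
        have e : w = x - i := by rw [← hiw]; abel
        rw [e]
        exact sub_mem hxF (hge hi)
      have hwR := ih (nn - 1) (by omega) ⟨hwF, hw⟩
      rw [← hiw]
      exact add_mem hi hwR
  have h0 : F p ≤ F p ⊓ W bW := le_inf le_rfl (by rw [hbW]; exact le_top)
  exact h0.trans (main (bW - aW).toNat bW (by omega))

include hW hF hFb haW hbF hbFb hHS in
lemma zsum_aux : ∀ d : ℕ, ∀ (s : Finset (ℤ × ℤ)) (v : ℤ × ℤ → H),
    (∀ j ∈ s, v j ∈ dI W F Fb j.1 j.2) → (∀ j ∈ s, j.1 + j.2 ≤ aW + d) →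
    (∑ j ∈ s, v j) = 0 → ∀ j ∈ s, v j = 0 := by
  intro d
  induction d with
  | zero =>
    intro s v hv hb hsum j hj
    have h1 : v j ∈ W (j.1 + j.2) := ((dI_le_FW j.1 j.2).trans inf_le_right) (hv j hj)
    have h2 : v j ∈ W aW := hW (show j.1 + j.2 ≤ aW by have := hb j hj; omega) h1
    rw [haW] at h2; exact (Submodule.mem_bot ℂ).mp h2
  | succ d ih =>
    intro s v hv hb hsum
    have hn : ∀ e ∈ s, e.1 + e.2 = aW + d + 1 → v e = 0 := by
      intro e he hew
      have hsplit : v e = - ∑ j ∈ s.erase e, v j := by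
        have h := Finset.add_sum_erase s v he
        rw [hsum] at h
        exact eq_neg_of_add_eq_zero_left h
      have hsum_mem : (∑ j ∈ s.erase e, v j) ∈
          gp W F (e.1 + e.2) (e.1 + 1) ⊔ gp W Fb (e.1 + e.2) (e.2 + 1) := by
        refine Submodule.sum_mem _ fun j hj => ?_
        have hjs := Finset.mem_of_mem_erase hj
        have hjne := Finset.ne_of_mem_erase hj
        have hjw : j.1 + j.2 ≤ e.1 + e.2 := by have := hb j hjs; omega
        rcases lt_or_eq_of_le hjw with hlt | heq
        · refine Submodule.mem_sup_left (Submodule.mem_sup_right ?_)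
          exact hW (show j.1 + j.2 ≤ e.1 + e.2 - 1 by omega)
            (((dI_le_FW j.1 j.2).trans inf_le_right) (hv j hjs))
        · rcases lt_trichotomy j.1 e.1 with h1 | h1 | h1
          · refine Submodule.mem_sup_right ?_
            have hle : dI W F Fb j.1 j.2 ≤ gp W Fb (e.1 + e.2) (e.2 + 1) := by
              refine inf_le_right.trans (sup_le ?_ ?_)
              · exact le_sup_of_le_left
                  (inf_le_inf (hFb (by omega)) (le_of_eq (by rw [heq])))
              · exact le_sup_of_le_right ((tail_le hW j.1 j.2).trans (hW (by omega)))
            exact hle (hv j hjs)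
          · exact absurd (Prod.ext_iff.mpr ⟨h1, by omega⟩) hjne
          · refine Submodule.mem_sup_left (Submodule.mem_sup_left ?_)
            have hle : dI W F Fb j.1 j.2 ≤ F (e.1 + 1) ⊓ W (e.1 + e.2) :=
              (dI_le_FW j.1 j.2).trans
                (inf_le_inf (hF (by omega)) (le_of_eq (by rw [heq])))
            exact hle (hv j hjs)
      have hve : v e ∈ (gp W F (e.1 + e.2) e.1 ⊓ gp W Fb (e.1 + e.2) e.2) ⊓
          (gp W F (e.1 + e.2) (e.1 + 1) ⊔ gp W Fb (e.1 + e.2) (e.2 + 1)) := by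
        refine ⟨⟨dI_le_gpF e.1 e.2 (hv e he), dI_le_gpFb hW e.1 e.2 (hv e he)⟩, ?_⟩
        rw [hsplit]; exact neg_mem hsum_mem
      have h1 : v e ∈ W (e.1 + e.2 - 1) :=
        grIndep hF hFb hbF hbFb hHS (m := e.1 + e.2) rfl hve
      have h2 := dI_inf_W hW hF hFb haW hbF hbFb hHS e.1 e.2
      have h3 : v e ∈ (⊥ : Submodule ℂ H) := h2 ▸ (Submodule.mem_inf.mpr ⟨hv e he, h1⟩)
      exact (Submodule.mem_bot ℂ).mp h3
    intro j hj
    by_cases hjw : j.1 + j.2 ≤ aW + d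
    · have hsum' : ∑ j ∈ s.filter (fun j => j.1 + j.2 ≤ aW + d), v j = 0 := by
        have hsplit := Finset.sum_filter_add_sum_filter_not s
          (fun j => j.1 + j.2 ≤ aW + d) v
        have hz : ∑ j ∈ s.filter (fun j => ¬ (j.1 + j.2 ≤ aW + d)), v j = 0 :=
          Finset.sum_eq_zero fun j hj => by
            obtain ⟨hjs, hjb⟩ := Finset.mem_filter.mp hj
            exact hn j hjs (by have := hb j hjs; omega)
        rw [hz, add_zero, hsum] at hsplit
        exact hsplit
      exact ih (s.filter (fun j => j.1 + j.2 ≤ aW + d)) v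
        (fun j hj => hv j (Finset.mem_of_mem_filter j hj))
        (fun j hj => (Finset.mem_filter.mp hj).2) hsum' j (Finset.mem_filter.mpr ⟨hj, hjw⟩)
    · exact hn j hj (by have := hb j hj; omega)

include hW hF hFb haW hbF hbFb hHS in
lemma zsum (s : Finset (ℤ × ℤ)) (v : ℤ × ℤ → H)
    (hv : ∀ j ∈ s, v j ∈ dI W F Fb j.1 j.2) (hsum : (∑ j ∈ s, v j) = 0) :
    ∀ j ∈ s, v j = 0 := by
  set d₀ := (bF + bFb - aW).toNat with hd₀
  have htn : bF + bFb - aW ≤ (d₀ : ℤ) := Int.self_le_toNat _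
  have hvz : ∀ j ∈ s, aW + (d₀ : ℤ) < j.1 + j.2 → v j = 0 := by
    intro j hj h
    have hbot : dI W F Fb j.1 j.2 = ⊥ := by
      rcases le_or_gt bF j.1 with h' | h'
      · exact dI_eq_bot_of_F hW hF hFb haW hbF hbFb hHS h'
      · exact dI_eq_bot_of_Fb hW hF hFb haW hbF hbFb hHS (show bFb ≤ j.2 by omega)
    have := hv j hj
    rw [hbot] at this
    exact (Submodule.mem_bot ℂ).mp this
  have hsum' : ∑ j ∈ s.filter (fun j => j.1 + j.2 ≤ aW + (d₀ : ℤ)), v j = 0 := by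
    have hsplit := Finset.sum_filter_add_sum_filter_not s
      (fun j => j.1 + j.2 ≤ aW + (d₀ : ℤ)) v
    have hz : ∑ j ∈ s.filter (fun j => ¬ (j.1 + j.2 ≤ aW + (d₀ : ℤ))), v j = 0 :=
      Finset.sum_eq_zero fun j hj => by
        obtain ⟨hjs, hjb⟩ := Finset.mem_filter.mp hj
        exact hvz j hjs (by omega)
    rw [hz, add_zero, hsum] at hsplit
    exact hsplit
  intro j hj
  by_cases hjw : j.1 + j.2 ≤ aW + (d₀ : ℤ)
  · exact zsum_aux hW hF hFb haW hbF hbFb hHS d₀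
      (s.filter (fun j => j.1 + j.2 ≤ aW + (d₀ : ℤ))) v
      (fun j hj => hv j (Finset.mem_of_mem_filter j hj))
      (fun j hj => (Finset.mem_filter.mp hj).2) hsum' j (Finset.mem_filter.mpr ⟨hj, hjw⟩)
  · exact hvz j hj (by omega)

include hW hF hFb haW hbF hbFb hHS in
lemma partC : iSupIndep (fun pq : ℤ × ℤ => dI W F Fb pq.1 pq.2) := by
  intro pq
  rw [Submodule.disjoint_def]
  intro x hx hx'
  rw [Submodule.mem_iSup_iff_exists_finsupp] at hx'
  obtain ⟨f, hf, hfsum⟩ := hx'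
  have hf0 : f pq = 0 := by
    have h := hf pq
    rw [iSup_neg (not_not_intro rfl)] at h
    exact (Submodule.mem_bot ℂ).mp h
  have hfj : ∀ j : ℤ × ℤ, j ≠ pq → f j ∈ dI W F Fb j.1 j.2 := by
    intro j hj
    have h := hf j
    rwa [iSup_pos hj] at h
  classical
  set v : ℤ × ℤ → H := fun j => if j = pq then -x else f j with hv
  have hpqs : pq ∉ f.support := by
    simp [Finsupp.mem_support_iff, hf0]
  have hmem : ∀ j ∈ insert pq f.support, v j ∈ dI W F Fb j.1 j.2 := by
    intro j hj
    by_cases hje : j = pq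
    · subst hje
      simp only [hv, if_pos rfl]
      exact neg_mem hx
    · simp only [hv, if_neg hje]
      exact hfj j hje
  have h2 : ∑ j ∈ f.support, f j = x := hfsum
  have hsum0 : ∑ j ∈ insert pq f.support, v j = 0 := by
    rw [Finset.sum_insert hpqs]
    have h1 : ∑ j ∈ f.support, v j = ∑ j ∈ f.support, f j :=
      Finset.sum_congr rfl fun j hj => by
        simp only [hv]
        rw [if_neg (fun h : j = pq => hpqs (by rw [← h]; exact hj))]
    rw [h1, h2]
    simp only [hv, if_pos rfl]
    exact neg_add_cancel x
  have hz := zsum hW hF hFb haW hbF hbFb hHS (insert pq f.support) v hmem hsum0 pq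
    (Finset.mem_insert_self _ _)
  simp only [hv, if_pos rfl] at hz
  exact neg_eq_zero.mp hz

end DI




end Stmt18Aux

open Stmt18Aux


/-- Deligne's canonical decomposition of a mixed Hodge structure.  Let `H` be a mixed
Hodge structure, modelled as a complex vector space with conjugation `σ` (coming from
the rational structure), an increasing weight filtration `W` defined over the rationals
(hence `σ`-stable), and a decreasing Hodge filtration `F` with conjugate `F̄`, such that
`F` and `F̄` induce a pure Hodge structure of weight `n` on each `Gr^W_n`.  Define
`I^{p,q} = (F^p ∩ W_{p+q}) ∩ (F̄^q ∩ W_{p+q} + Σ_{i≥2} F̄^{q-i+1} ∩ W_{p+q-i})`.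
Then the projection `W_{p+q} → Gr^W_{p+q}` induces an isomorphism of `I^{p,q}` onto
`H^{p,q}(Gr^W_{p+q})` (i.e. `I^{p,q} ∩ W_{p+q-1} = 0` and
`I^{p,q} + W_{p+q-1} = F^p-part ∩ F̄^q-part` of `W_{p+q}` mod `W_{p+q-1}`), and
`W_n = ⊕_{p+q≤n} I^{p,q}`, `F^p = ⊕_{p'≥p} I^{p',q'}`. -/
theorem stmt18 (H : Type*) [AddCommGroup H] [Module ℂ H]
    (σ : H → H)
    (σadd : ∀ x y, σ (x + y) = σ x + σ y)
    (σsmul : ∀ (c : ℂ) (x : H), σ (c • x) = (starRingEnd ℂ c) • σ x)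
    (σinv : ∀ x, σ (σ x) = x)
    (W : ℤ → Submodule ℂ H) (hW : Monotone W)
    (hWbot : ∃ a, W a = ⊥) (hWtop : ∃ a, W a = ⊤)
    (hWreal : ∀ n : ℤ, ∀ x ∈ W n, σ x ∈ W n)
    (F : ℤ → Submodule ℂ H) (hF : Antitone F)
    (hFtop : ∃ a, F a = ⊤) (hFbot : ∃ a, F a = ⊥)
    (Fbar : ℤ → Submodule ℂ H)
    (hFbar : ∀ p : ℤ, (Fbar p : Set H) = σ '' (F p : Set H))
    -- `F` and `F̄` induce an `n`-opposite pair on each `Gr^W_n`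
    -- (expressed at the subspace level) :
    (hHS : ∀ n p q : ℤ, p + q ≠ n →
      ((F p ⊓ W n) ⊔ W (n - 1)) ⊓ ((Fbar q ⊓ W n) ⊔ W (n - 1)) ≤
        (((F (p + 1) ⊓ W n) ⊔ W (n - 1)) ⊓ ((Fbar q ⊓ W n) ⊔ W (n - 1))) ⊔
        (((F p ⊓ W n) ⊔ W (n - 1)) ⊓ ((Fbar (q + 1) ⊓ W n) ⊔ W (n - 1)))) :
    let I : ℤ → ℤ → Submodule ℂ H := fun p q =>
      (F p ⊓ W (p + q)) ⊓
        ((Fbar q ⊓ W (p + q)) ⊔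
          ⨆ i : ℤ, ⨆ _ : 2 ≤ i, Fbar (q - i + 1) ⊓ W (p + q - i))
    (∀ p q : ℤ,
      I p q ⊓ W (p + q - 1) = ⊥ ∧
      I p q ⊔ W (p + q - 1) =
        ((F p ⊓ W (p + q)) ⊔ W (p + q - 1)) ⊓
          ((Fbar q ⊓ W (p + q)) ⊔ W (p + q - 1))) ∧
    (∀ n : ℤ, W n = ⨆ p : ℤ, ⨆ q : ℤ, ⨆ _ : p + q ≤ n, I p q) ∧
    (iSupIndep fun pq : ℤ × ℤ => I pq.1 pq.2) ∧
    (∀ p : ℤ, F p = ⨆ p' : ℤ, ⨆ _ : p ≤ p', ⨆ q' : ℤ, I p' q') := by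
  intro I
  obtain ⟨aW, haW⟩ := hWbot
  obtain ⟨bW, hbW⟩ := hWtop
  obtain ⟨tF, htF⟩ := hFtop
  obtain ⟨bF, hbF⟩ := hFbot
  have hσ0 : σ 0 = 0 := by
    have h := σadd 0 0
    rw [add_zero] at h
    exact (left_eq_add.mp h)
  have hFbanti : Antitone Fbar := by
    intro a b hab
    rw [← SetLike.coe_subset_coe, hFbar, hFbar]
    exact Set.image_mono (f := σ) (SetLike.coe_subset_coe.mpr (hF hab))
  have htFb : Fbar tF = ⊤ := by
    rw [eq_top_iff]
    intro x _
    have h : x ∈ (Fbar tF : Set H) := by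
      rw [hFbar]
      exact ⟨σ x, by rw [htF]; exact SetLike.mem_coe.mpr trivial, σinv x⟩
    exact SetLike.mem_coe.mp h
  have hbFb : Fbar bF = ⊥ := by
    rw [eq_bot_iff]
    intro x hx
    have hx' : x ∈ (Fbar bF : Set H) := hx
    rw [hFbar] at hx'
    obtain ⟨y, hy, rfl⟩ := hx'
    have hy0 : y = 0 := by
      have h : y ∈ (⊥ : Submodule ℂ H) := hbF ▸ (SetLike.mem_coe.mp hy)
      exact (Submodule.mem_bot ℂ).mp h
    rw [hy0, hσ0]
    exact (Submodule.mem_bot ℂ).mpr rfl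
  have hHS' : ∀ m p q : ℤ, p + q ≠ m →
      gp W F m p ⊓ gp W Fbar m q ≤
        (gp W F m (p + 1) ⊓ gp W Fbar m q) ⊔ (gp W F m p ⊓ gp W Fbar m (q + 1)) := hHS
  refine ⟨fun p q => ⟨?_, ?_⟩, fun n => ?_, ?_, fun p => ?_⟩
  · exact dI_inf_W hW hF hFbanti haW hbF hbFb hHS' p q
  · exact dI_sup_W hW hF hFbanti haW htF hbF htFb hbFb hHS' p q
  · exact partB hW hF hFbanti haW htF hbF htFb hbFb hHS' n
  · exact partC hW hF hFbanti haW hbF hbFb hHS'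
  · exact partD hW hF hFbanti haW htF hbF htFb hbFb hHS' p hbW
end

section
/- Every morphism of mixed Hodge structures is strict for both the weight and Hodge filtrations: if f : H → H' is a ℚ-linear map compatible with W and (after ⊗ℂ) with F, then f(W_n H_ℚ) = f(H_ℚ) ∩ W_n H'_ℚ for all n and f(F^p H_ℂ) = f(H_ℂ) ∩ F^p H'_ℂ for all p. -/
open TensorProduct

/-- Complex conjugation on `ℂ` as a `ℚ`-linear map. -/
noncomputable def conjQ : ℂ →ₗ[ℚ] ℂ :=
  (starRingEnd ℂ).toAddMonoidHom.toRatLinearMap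

/-- The conjugation on `H_ℂ = ℂ ⊗_ℚ H_ℚ` with respect to the rational structure. -/
noncomputable def sigmaC (Hq : Type*) [AddCommGroup Hq] [Module ℚ Hq] :
    (ℂ ⊗[ℚ] Hq) →ₗ[ℚ] (ℂ ⊗[ℚ] Hq) :=
  TensorProduct.map conjQ LinearMap.id

/-- The complexification of a rational filtration. -/
noncomputable def complexifyFil (Hq : Type*) [AddCommGroup Hq] [Module ℚ Hq]
    (W : ℤ → Submodule ℚ Hq) : ℤ → Submodule ℂ (ℂ ⊗[ℚ] Hq) :=
  fun n => Submodule.span ℂ (⇑(TensorProduct.mk ℚ ℂ Hq 1) '' (W n : Set Hq))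


open TensorProduct

namespace MHS

structure Data (V : Type*) [AddCommGroup V] [Module ℂ V] where
  Wc : ℤ → Submodule ℂ V
  F : ℤ → Submodule ℂ V
  Fb : ℤ → Submodule ℂ V
  hW : Monotone Wc
  hF : Antitone F
  hFb : Antitone Fb
  nb : ℤ
  nt : ℤ
  hnb : Wc nb = ⊥
  hnt : Wc nt = ⊤
  aT : ℤ
  aB : ℤ
  bT : ℤ
  bB : ℤ
  haT : F aT = ⊤
  haB : F aB = ⊥
  hbT : Fb bT = ⊤
  hbB : Fb bB = ⊥
  hHS : ∀ n a b : ℤ, a + b ≠ n →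
    ((F a ⊓ Wc n) ⊔ Wc (n-1)) ⊓ ((Fb b ⊓ Wc n) ⊔ Wc (n-1)) ≤
    (((F (a+1) ⊓ Wc n) ⊔ Wc (n-1)) ⊓ ((Fb b ⊓ Wc n) ⊔ Wc (n-1))) ⊔
    (((F a ⊓ Wc n) ⊔ Wc (n-1)) ⊓ ((Fb (b+1) ⊓ Wc n) ⊔ Wc (n-1)))

namespace Data

variable {V : Type*} [AddCommGroup V] [Module ℂ V] (D : Data V)

def S (a b n : ℤ) : Submodule ℂ V :=
  ((D.F a ⊓ D.Wc n) ⊔ D.Wc (n-1)) ⊓ ((D.Fb b ⊓ D.Wc n) ⊔ D.Wc (n-1))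

def U (p q : ℤ) : Submodule ℂ V :=
  ⨆ (j : ℤ) (_ : 2 ≤ j), D.Fb (q - j + 1) ⊓ D.Wc (p + q - j)

def I (p q : ℤ) : Submodule ℂ V :=
  (D.F p ⊓ D.Wc (p + q)) ⊓ ((D.Fb q ⊓ D.Wc (p + q)) ⊔ D.U p q)

lemma Wc_bot {n : ℤ} (h : n ≤ D.nb) : D.Wc n = ⊥ :=
  le_bot_iff.mp (D.hnb ▸ D.hW h)

lemma F_top {a : ℤ} (h : a ≤ D.aT) : D.F a = ⊤ :=
  top_le_iff.mp (D.haT ▸ D.hF h)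

lemma F_bot {a : ℤ} (h : D.aB ≤ a) : D.F a = ⊥ :=
  le_bot_iff.mp (D.haB ▸ D.hF h)

lemma Fb_top {b : ℤ} (h : b ≤ D.bT) : D.Fb b = ⊤ :=
  top_le_iff.mp (D.hbT ▸ D.hFb h)

lemma Fb_bot {b : ℤ} (h : D.bB ≤ b) : D.Fb b = ⊥ :=
  le_bot_iff.mp (D.hbB ▸ D.hFb h)

lemma U_le_W (p q : ℤ) : D.U p q ≤ D.Wc (p + q - 2) := by
  refine iSup₂_le fun j hj => ?_
  exact inf_le_right.trans (D.hW (by omega))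

lemma I_le_F (p q : ℤ) : D.I p q ≤ D.F p := inf_le_left.trans inf_le_left

lemma I_le_W (p q : ℤ) : D.I p q ≤ D.Wc (p + q) := inf_le_left.trans inf_le_right

lemma gr_bot {m a b : ℤ} (h : m < a + b) : D.S a b m ≤ D.Wc (m - 1) := by
  suffices H : ∀ k : ℕ, ∀ a b : ℤ, m < a + b → (D.aB - a) + (D.bB - b) ≤ (k : ℤ) →
      D.S a b m ≤ D.Wc (m - 1) by
    refine H ((D.aB - a) + (D.bB - b)).toNat a b h ?_
    exact Int.self_le_toNat _
  intro k
  induction k with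
  | zero =>
    intro a b hab hm
    by_cases ha : D.aB ≤ a
    · refine inf_le_left.trans (sup_le ?_ le_rfl)
      rw [F_bot D ha]; simp
    · by_cases hb : D.bB ≤ b
      · refine inf_le_right.trans (sup_le ?_ le_rfl)
        rw [Fb_bot D hb]; simp
      · omega
  | succ k IH =>
    intro a b hab hm
    by_cases ha : D.aB ≤ a
    · refine inf_le_left.trans (sup_le ?_ le_rfl)
      rw [F_bot D ha]; simp
    · by_cases hb : D.bB ≤ b
      · refine inf_le_right.trans (sup_le ?_ le_rfl)
        rw [Fb_bot D hb]; simp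
      · refine (D.hHS m a b (by omega)).trans (sup_le ?_ ?_)
        · exact IH (a+1) b (by omega) (by omega)
        · exact IH a (b+1) (by omega) (by omega)

def Gspan (m a b : ℤ) : Submodule ℂ V :=
  ⨆ (r : ℤ) (s : ℤ) (_ : r + s = m) (_ : a ≤ r) (_ : b ≤ s), D.S r s m

lemma Gspan_mono {m a a' b b' : ℤ} (ha : a ≤ a') (hb : b ≤ b') :
    D.Gspan m a' b' ≤ D.Gspan m a b := by
  refine iSup_le fun r => iSup_le fun s => iSup_le fun hrs => iSup_le fun har => iSup_le fun hbs => ?_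
  exact le_iSup_of_le r <| le_iSup_of_le s <| le_iSup_of_le hrs <|
    le_iSup_of_le (le_trans ha har) <| le_iSup_of_le (le_trans hb hbs) le_rfl

lemma gr_span {m a b : ℤ} (h : a + b ≤ m) : D.S a b m ≤ D.Gspan m a b := by
  suffices H : ∀ k : ℕ, ∀ a b : ℤ, a + b ≤ m → m - (a + b) ≤ (k : ℤ) →
      D.S a b m ≤ D.Gspan m a b by
    exact H (m - (a+b)).toNat a b h (Int.self_le_toNat _)
  intro k
  induction k with
  | zero =>
    intro a b hab hm
    have : a + b = m := by omega
    exact le_iSup_of_le a <| le_iSup_of_le b <| le_iSup_of_le this <|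
      le_iSup_of_le le_rfl <| le_iSup_of_le le_rfl le_rfl
  | succ k IH =>
    intro a b hab hm
    by_cases hab' : a + b = m
    · exact le_iSup_of_le a <| le_iSup_of_le b <| le_iSup_of_le hab' <|
        le_iSup_of_le le_rfl <| le_iSup_of_le le_rfl le_rfl
    · refine (D.hHS m a b hab').trans (sup_le ?_ ?_)
      · exact (IH (a+1) b (by omega) (by omega)).trans (D.Gspan_mono (by omega) le_rfl)
      · exact (IH a (b+1) (by omega) (by omega)).trans (D.Gspan_mono le_rfl (by omega))

end Data
end MHS

namespace MHS
namespace Data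

variable {V : Type*} [AddCommGroup V] [Module ℂ V] (D : Data V)

lemma Wc_le_S (m : ℤ) : D.Wc m ≤ D.S (min D.aT (m - D.bT)) D.bT m := by
  rw [S, F_top D (min_le_left _ _), D.hbT]
  simp only [top_inf_eq]
  exact le_inf le_sup_left le_sup_left

lemma span2 {m p s : ℤ} (h : p + s = m + 1) :
    D.Wc m ≤ (D.F p ⊓ D.Wc m) ⊔ ((D.Fb s ⊓ D.Wc m) ⊔ D.Wc (m-1)) := by
  refine (D.Wc_le_S m).trans ((D.gr_span (by omega)).trans ?_)
  refine iSup_le fun r => iSup_le fun t => iSup_le fun hrt => iSup_le fun _ => iSup_le fun _ => ?_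
  by_cases hr : p ≤ r
  · refine inf_le_left.trans (sup_le ?_ ?_)
    · exact le_sup_of_le_left (inf_le_inf_right _ (D.hF hr))
    · exact le_sup_of_le_right le_sup_right
  · have hts : s ≤ t := by omega
    refine inf_le_right.trans (sup_le ?_ ?_)
    · exact le_sup_of_le_right (le_sup_of_le_left (inf_le_inf_right _ (D.hFb hts)))
    · exact le_sup_of_le_right le_sup_right

lemma lift {p q n : ℤ} (hn : p + q = n) {x y : V}
    (hx : x ∈ D.F p ⊓ D.Wc n) (hy : y ∈ (D.Fb q ⊓ D.Wc n) ⊔ D.U p q)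
    (hxy : x - y ∈ D.Wc (n-1)) :
    ∃ z ∈ D.I p q, x - z ∈ D.F p ⊓ D.Wc (n-1) := by
  suffices H : ∀ k : ℕ, ∀ m : ℤ, m ≤ n - 1 → m ≤ D.nb + k → ∀ x y : V,
      x ∈ D.F p ⊓ D.Wc n → y ∈ (D.Fb q ⊓ D.Wc n) ⊔ D.U p q → x - y ∈ D.Wc m →
      ∃ z ∈ D.I p q, x - z ∈ D.F p ⊓ D.Wc (n-1) by
    refine H (n - 1 - D.nb).toNat (n-1) le_rfl (by omega) x y hx hy hxy
  intro k
  induction k with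
  | zero =>
    intro m hm1 hm2 x y hx hy hxy
    have hxy0 : x - y = 0 := by
      have := (D.Wc_bot (by omega : m ≤ D.nb)) ▸ hxy
      simpa using this
    have hxyeq : x = y := by rwa [sub_eq_zero] at hxy0
    refine ⟨x, ?_, by simp⟩
    rw [I, hn]
    exact ⟨hx, hxyeq ▸ hy⟩
  | succ k IH =>
    intro m hm1 hm2 x y hx hy hxy
    -- decompose x - y using span2 at weight m
    have hd := D.span2 (p := p) (s := m + 1 - p) (by omega) hxy
    obtain ⟨a, ha, bc, hbc, habc⟩ := Submodule.mem_sup.mp hd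
    obtain ⟨b, hb, c, hc, hbcc⟩ := Submodule.mem_sup.mp hbc
    have hx' : x - a ∈ D.F p ⊓ D.Wc n :=
      ⟨sub_mem hx.1 ha.1, sub_mem hx.2 (D.hW (by omega : m ≤ n) ha.2)⟩
    have hy' : y + b ∈ (D.Fb q ⊓ D.Wc n) ⊔ D.U p q := by
      refine add_mem hy ?_
      by_cases hmn : m = n - 1
      · refine Submodule.mem_sup_left ?_
        have : m + 1 - p = q := by omega
        rw [this] at hb
        exact ⟨hb.1, D.hW (by omega : m ≤ n) hb.2⟩
      · -- m ≤ n - 2, so b lands in U p q with j = n - m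
        have hj : (2:ℤ) ≤ n - m := by omega
        have h1 : q - (n - m) + 1 = m + 1 - p := by omega
        have h2 : p + q - (n - m) = m := by omega
        refine Submodule.mem_sup_right ?_
        refine (le_iSup₂ (f := fun (j:ℤ) (_ : 2 ≤ j) => D.Fb (q - j + 1) ⊓ D.Wc (p + q - j))
          (n - m) hj) ?_
        rw [h1, h2]
        exact hb
    have hc' : (x - a) - (y + b) = c := by
      have : x = a + (b + c) + y := by
        rw [hbcc, habc]; abel
      rw [this]; abel
    obtain ⟨z, hz, hxz⟩ := IH (m-1) (by omega) (by omega) (x - a) (y + b) hx' hy'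
      (hc' ▸ hc)
    refine ⟨z, hz, ?_⟩
    have : x - z = (x - a - z) + a := by abel
    rw [this]
    exact add_mem hxz ⟨ha.1, D.hW (by omega : m ≤ n - 1) ha.2⟩

lemma S_le {r s n : ℤ} (h : r + s = n) : D.S r s n ≤ D.I r s ⊔ D.Wc (n-1) := by
  intro v hv
  obtain ⟨x1, hx1, w1, hw1, hv1⟩ := Submodule.mem_sup.mp hv.1
  obtain ⟨y1, hy1, w2, hw2, hv2⟩ := Submodule.mem_sup.mp hv.2
  have hxy : x1 - y1 ∈ D.Wc (n-1) := by
    have heq : x1 + w1 = y1 + w2 := by rw [hv1, hv2]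
    have : x1 - y1 = w2 - w1 := by
      calc x1 - y1 = (x1 + w1) - y1 - w1 := by abel
        _ = (y1 + w2) - y1 - w1 := by rw [heq]
        _ = w2 - w1 := by abel
    rw [this]; exact sub_mem hw2 hw1
  obtain ⟨z, hz, hxz⟩ := D.lift h hx1 (Submodule.mem_sup_left hy1) hxy
  have : v = z + ((x1 - z) + w1) := by rw [← hv1]; abel
  rw [this]
  exact add_mem (Submodule.mem_sup_left hz)
    (Submodule.mem_sup_right (add_mem hxz.2 hw1))

end Data
end MHS

namespace MHS
namespace Data

variable {V : Type*} [AddCommGroup V] [Module ℂ V] (D : Data V)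

def Tspan (n : ℤ) : Submodule ℂ V :=
  ⨆ (i : ℤ × ℤ) (_ : i.1 + i.2 ≤ n), D.I i.1 i.2

def TF (p : ℤ) : Submodule ℂ V :=
  ⨆ (i : ℤ × ℤ) (_ : p ≤ i.1), D.I i.1 i.2

lemma Tspan_mono {n n' : ℤ} (h : n ≤ n') : D.Tspan n ≤ D.Tspan n' := by
  refine iSup_le fun i => iSup_le fun hi => ?_
  exact le_iSup_of_le i (le_iSup_of_le (le_trans hi h) le_rfl)

lemma TF_le_F (p : ℤ) : D.TF p ≤ D.F p := by
  refine iSup_le fun i => iSup_le fun hi => ?_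
  exact (D.I_le_F i.1 i.2).trans (D.hF hi)

lemma W_span (n : ℤ) : D.Wc n ≤ D.Tspan n := by
  suffices H : ∀ k : ℕ, ∀ n : ℤ, n ≤ D.nb + k → D.Wc n ≤ D.Tspan n by
    exact H (n - D.nb).toNat n (by omega)
  intro k
  induction k with
  | zero =>
    intro n hn
    rw [D.Wc_bot (by omega)]
    exact bot_le
  | succ k IH =>
    intro n hn
    refine (D.Wc_le_S n).trans ((D.gr_span (by omega)).trans ?_)
    refine iSup_le fun r => iSup_le fun s => iSup_le fun hrs => iSup_le fun _ =>
      iSup_le fun _ => ?_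
    refine (D.S_le hrs).trans (sup_le ?_ ?_)
    · exact le_iSup_of_le (r, s) (le_iSup_of_le (le_of_eq hrs) le_rfl)
    · exact ((IH (n-1) (by omega)).trans (D.Tspan_mono (by omega)))

lemma F_spanW (p : ℤ) : ∀ n : ℤ, D.F p ⊓ D.Wc n ≤ D.TF p := by
  suffices H : ∀ k : ℕ, ∀ n : ℤ, n ≤ D.nb + k → D.F p ⊓ D.Wc n ≤ D.TF p by
    exact fun n => H (n - D.nb).toNat n (by omega)
  intro k
  induction k with
  | zero =>
    intro n hn
    rw [D.Wc_bot (by omega)]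
    simp
  | succ k IH =>
    intro n hn x hx
    -- x lies in Gspan n p b0 with b0 small
    have hb0 : p + min D.bT (n - p) ≤ n := by omega
    have hxS : x ∈ D.S p (min D.bT (n - p)) n := by
      constructor
      · exact Submodule.mem_sup_left hx
      · rw [Fb_top D (min_le_left _ _)]
        simp only [top_inf_eq]
        exact Submodule.mem_sup_left hx.2
    have hxG := D.gr_span hb0 hxS
    have hG : D.Gspan n p (min D.bT (n - p)) ≤ D.TF p ⊔ D.Wc (n-1) := by
      refine iSup_le fun r => iSup_le fun s => iSup_le fun hrs => iSup_le fun hpr =>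
        iSup_le fun _ => ?_
      refine (D.S_le hrs).trans (sup_le ?_ le_sup_right)
      exact le_sup_of_le_left (le_iSup_of_le (r, s) (le_iSup_of_le hpr le_rfl))
    obtain ⟨t, ht, w, hw, hx'⟩ := Submodule.mem_sup.mp (hG hxG)
    have hwF : w ∈ D.F p ⊓ D.Wc (n-1) := by
      have hwe : w = x - t := by rw [← hx']; abel
      exact ⟨hwe ▸ sub_mem hx.1 (D.TF_le_F p ht), hw⟩
    have := IH (n-1) (by omega) hwF
    rw [← hx']
    exact add_mem ht this

lemma F_span (p : ℤ) : D.F p ≤ D.TF p := by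
  have : D.F p = D.F p ⊓ D.Wc D.nt := by rw [D.hnt, inf_top_eq]
  rw [this]
  exact D.F_spanW p D.nt

-- the shifted tails of `U`
def Ut (p q m : ℤ) : Submodule ℂ V :=
  ⨆ (j : ℤ) (_ : p + q - m + 1 ≤ j), D.Fb (q - j + 1) ⊓ D.Wc (p + q - j)

lemma U_eq_Ut (p q : ℤ) : D.U p q = D.Ut p q (p + q - 1) := by
  refine le_antisymm (iSup₂_le fun j hj => ?_) (iSup₂_le fun j hj => ?_)
  · exact le_iSup₂_of_le j (by omega) le_rfl
  · exact le_iSup₂_of_le j (by omega) le_rfl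

lemma Ut_le_W (p q m : ℤ) : D.Ut p q m ≤ D.Wc (m - 1) := by
  refine iSup₂_le fun j hj => inf_le_right.trans (D.hW (by omega))

lemma Ut_split (p q m : ℤ) :
    D.Ut p q m = (D.Fb (m - p) ⊓ D.Wc (m - 1)) ⊔ D.Ut p q (m - 1) := by
  refine le_antisymm (iSup₂_le fun j hj => ?_) (sup_le ?_ (iSup₂_le fun j hj => ?_))
  · by_cases hje : j = p + q - m + 1
    · subst hje
      have h1 : q - (p + q - m + 1) + 1 = m - p := by omega
      have h2 : p + q - (p + q - m + 1) = m - 1 := by omega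
      rw [h1, h2]
      exact le_sup_left
    · exact le_sup_of_le_right (le_iSup₂_of_le j (by omega) le_rfl)
  · have h1 : q - (p + q - m + 1) + 1 = m - p := by omega
    have h2 : p + q - (p + q - m + 1) = m - 1 := by omega
    refine le_iSup₂_of_le (p + q - m + 1) le_rfl ?_
    rw [h1, h2]
  · exact le_iSup₂_of_le j (by omega) le_rfl

lemma I_inf_W (p q : ℤ) : D.I p q ⊓ D.Wc (p + q - 1) = ⊥ := by
  rw [eq_bot_iff]
  suffices H : ∀ k : ℕ, ∀ m : ℤ, m ≤ D.nb + k → ∀ x : V,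
      x ∈ D.F p → x ∈ D.Wc m → x ∈ (D.Fb (m + 1 - p) ⊓ D.Wc m) ⊔ D.Ut p q m → x = 0 by
    intro x hx
    have hxF : x ∈ D.F p := (D.I_le_F p q) hx.1
    have hxW : x ∈ D.Wc (p + q - 1) := hx.2
    have hdec : x ∈ (D.Fb (p + q - 1 + 1 - p) ⊓ D.Wc (p + q - 1)) ⊔ D.Ut p q (p + q - 1) := by
      have hx2 : x ∈ (D.Fb q ⊓ D.Wc (p+q)) ⊔ D.U p q := hx.1.2
      obtain ⟨y, hy, u, hu, hyu⟩ := Submodule.mem_sup.mp hx2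
      have huW : u ∈ D.Wc (p + q - 1) := by
        rw [U_eq_Ut] at hu
        exact (D.Ut_le_W p q (p+q-1)).trans (D.hW (by omega)) hu
      have hyW : y ∈ D.Wc (p + q - 1) := by
        have : y = x - u := by rw [← hyu]; abel
        rw [this]; exact sub_mem hxW huW
      have hq : p + q - 1 + 1 - p = q := by omega
      rw [hq]
      refine Submodule.mem_sup.mpr ⟨y, ⟨hy.1, hyW⟩, u, ?_, hyu⟩
      rw [← U_eq_Ut]; exact hu
    exact (H (p + q - 1 - D.nb).toNat (p+q-1) (by omega) x hxF hxW hdec) ▸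
      Submodule.zero_mem ⊥
  intro k
  induction k with
  | zero =>
    intro m hm x _ hxW _
    have := (D.Wc_bot (by omega : m ≤ D.nb)) ▸ hxW
    simpa using this
  | succ k IH =>
    intro m hm x hxF hxW hdec
    -- x ∈ S p (m+1-p) m, whose total degree is m+1 > m
    have hxS : x ∈ D.S p (m + 1 - p) m := by
      constructor
      · exact Submodule.mem_sup_left ⟨hxF, hxW⟩
      · obtain ⟨y, hy, u, hu, hyu⟩ := Submodule.mem_sup.mp hdec
        refine Submodule.mem_sup.mpr ⟨y, hy, u, (D.Ut_le_W p q m) hu, hyu⟩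
    have hxW1 : x ∈ D.Wc (m - 1) := D.gr_bot (by omega) hxS
    -- rebuild the decomposition one level down
    obtain ⟨y, hy, u, hu, hyu⟩ := Submodule.mem_sup.mp hdec
    rw [D.Ut_split p q m] at hu
    obtain ⟨u1, hu1, u2, hu2, hu12⟩ := Submodule.mem_sup.mp hu
    have hyW : y ∈ D.Wc (m - 1) := by
      have : y = x - u := by rw [← hyu]; abel
      rw [this]
      refine sub_mem hxW1 ?_
      rw [← hu12]
      exact add_mem (hu1.2) ((D.Ut_le_W p q (m-1)).trans (D.hW (by omega)) hu2)
    have hdec' : x ∈ (D.Fb (m - 1 + 1 - p) ⊓ D.Wc (m - 1)) ⊔ D.Ut p q (m - 1) := by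
      have hmp : m - 1 + 1 - p = m - p := by omega
      rw [hmp]
      refine Submodule.mem_sup.mpr ⟨y + u1, ?_, u2, hu2, ?_⟩
      · exact ⟨add_mem (D.hFb (by omega : m - p ≤ m + 1 - p) hy.1) hu1.1,
          add_mem hyW hu1.2⟩
      · rw [← hyu, ← hu12]; abel
    exact IH (m-1) (by omega) x hxF hxW1 hdec'

end Data
end MHS

namespace MHS
namespace Data

variable {V : Type*} [AddCommGroup V] [Module ℂ V] (D : Data V)

lemma indep : ∀ (s : Finset (ℤ × ℤ)) (v : ℤ × ℤ → V),
    (∀ i ∈ s, v i ∈ D.I i.1 i.2) → ∑ i ∈ s, v i = 0 → ∀ i ∈ s, v i = 0 := by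
  intro s
  induction s using Finset.strongInductionOn with
  | _ s IHs =>
    intro v hv hsum
    rcases Finset.eq_empty_or_nonempty s with rfl | hne
    · simp
    -- pick i0 with maximal weight, then maximal first coordinate
    obtain ⟨j0, hj0s, hj0max⟩ := Finset.exists_max_image s (fun i => i.1 + i.2) hne
    set N : ℤ := j0.1 + j0.2 with hN
    have hne' : (s.filter (fun i => i.1 + i.2 = N)).Nonempty :=
      ⟨j0, Finset.mem_filter.mpr ⟨hj0s, rfl⟩⟩
    obtain ⟨i0, hi0f, hi0max⟩ :=
      Finset.exists_max_image (s.filter (fun i => i.1 + i.2 = N)) (fun i => i.1) hne'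
    obtain ⟨hi0s, hi0N⟩ := Finset.mem_filter.mp hi0f
    -- every other term lies in (Fb (i0.2+1) ⊓ Wc N) ⊔ Wc (N-1)
    have hB : ∀ i ∈ s.erase i0, v i ∈ (D.Fb (i0.2 + 1) ⊓ D.Wc N) ⊔ D.Wc (N - 1) := by
      intro i hi
      obtain ⟨hine, his⟩ := Finset.mem_erase.mp hi
      have hiv := hv i his
      by_cases hwt : i.1 + i.2 = N
      · have hile : i.1 ≤ i0.1 := hi0max i (Finset.mem_filter.mpr ⟨his, hwt⟩)
        have hilt : i.1 < i0.1 := by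
          rcases lt_or_eq_of_le hile with h | h
          · exact h
          · exfalso; apply hine
            have : i.2 = i0.2 := by omega
            exact Prod.ext h this
        have hq : i0.2 + 1 ≤ i.2 := by omega
        have : v i ∈ (D.Fb i.2 ⊓ D.Wc (i.1 + i.2)) ⊔ D.U i.1 i.2 := hiv.2
        refine Submodule.mem_sup.mp this |>.elim ?_
        rintro y ⟨hy, u, hu, hyu⟩
        refine Submodule.mem_sup.mpr ⟨y, ⟨D.hFb hq hy.1, hwt ▸ hy.2⟩, u, ?_, hyu⟩
        exact (D.U_le_W i.1 i.2).trans (D.hW (by omega)) hu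
      · have hwlt : i.1 + i.2 ≤ N - 1 := by
          have := hj0max i his
          omega
        exact Submodule.mem_sup_right ((D.I_le_W i.1 i.2).trans (D.hW hwlt) hiv)
    have hvi0 : v i0 = 0 := by
      have hadd : v i0 + ∑ i ∈ s.erase i0, v i = 0 := by
        rw [Finset.add_sum_erase s v hi0s, hsum]
      have hsum' : v i0 = -∑ i ∈ s.erase i0, v i := eq_neg_of_add_eq_zero_left hadd
      have hmem : v i0 ∈ (D.Fb (i0.2 + 1) ⊓ D.Wc N) ⊔ D.Wc (N - 1) := by
        rw [hsum']
        exact neg_mem (Submodule.sum_mem _ hB)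
      have hS : v i0 ∈ D.S i0.1 (i0.2 + 1) N := by
        refine ⟨Submodule.mem_sup_left ?_, hmem⟩
        exact ⟨(D.I_le_F i0.1 i0.2) (hv i0 hi0s), hi0N ▸ (D.I_le_W i0.1 i0.2) (hv i0 hi0s)⟩
      have hW1 : v i0 ∈ D.Wc (N - 1) := D.gr_bot (by omega) hS
      have : v i0 ∈ D.I i0.1 i0.2 ⊓ D.Wc (i0.1 + i0.2 - 1) :=
        ⟨hv i0 hi0s, by rw [hi0N]; exact hW1⟩
      rw [D.I_inf_W i0.1 i0.2] at this
      simpa using this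
    have hrest : ∀ i ∈ s.erase i0, v i = 0 := by
      refine IHs (s.erase i0) (Finset.erase_ssubset hi0s) v
        (fun i hi => hv i (Finset.mem_of_mem_erase hi)) ?_
      have := Finset.add_sum_erase s v hi0s
      rw [hsum, hvi0, zero_add] at this
      exact this
    intro i hi
    by_cases hii : i = i0
    · rw [hii]; exact hvi0
    · exact hrest i (Finset.mem_erase.mpr ⟨hii, hi⟩)

end Data
end MHS

namespace MHS
namespace Data

variable {V : Type*} [AddCommGroup V] [Module ℂ V] (D : Data V)

lemma decomp {C : ℤ × ℤ → Prop} {x : V}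
    (hx : x ∈ ⨆ (i : ℤ × ℤ) (_ : C i), D.I i.1 i.2) :
    ∃ u : (ℤ × ℤ) →₀ V, (∀ i, u i ∈ D.I i.1 i.2) ∧ (∀ i, ¬ C i → u i = 0) ∧
      (u.sum fun _ m => m) = x := by
  obtain ⟨u, hu, hsum⟩ :=
    (Submodule.mem_iSup_iff_exists_finsupp (fun i => ⨆ (_ : C i), D.I i.1 i.2) x).mp hx
  refine ⟨u, fun i => ?_, fun i hC => ?_, hsum⟩
  · have := hu i
    by_cases hC : C i
    · rwa [iSup_pos hC] at this
    · rw [iSup_neg hC] at this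
      simp only [Submodule.mem_bot] at this
      rw [this]; exact zero_mem _
  · have := hu i
    rw [iSup_neg hC] at this
    simpa using this

variable {V' : Type*} [AddCommGroup V'] [Module ℂ V'] (D' : Data V')
variable (φ : V →ₗ[ℂ] V')

lemma map_I (hφW : ∀ n, (D.Wc n).map φ ≤ D'.Wc n)
    (hφF : ∀ p, (D.F p).map φ ≤ D'.F p)
    (hφFb : ∀ q, (D.Fb q).map φ ≤ D'.Fb q)
    (p q : ℤ) {x : V} (hx : x ∈ D.I p q) : φ x ∈ D'.I p q := by
  refine ⟨⟨hφF p ⟨x, hx.1.1, rfl⟩, hφW (p+q) ⟨x, hx.1.2, rfl⟩⟩, ?_⟩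
  obtain ⟨y, hy, u, hu, hyu⟩ := Submodule.mem_sup.mp hx.2
  have hφy : φ y ∈ D'.Fb q ⊓ D'.Wc (p + q) :=
    ⟨hφFb q ⟨y, hy.1, rfl⟩, hφW (p+q) ⟨y, hy.2, rfl⟩⟩
  have hφu : φ u ∈ D'.U p q := by
    have hUle : (D.U p q).map φ ≤ D'.U p q := by
      rw [U, Submodule.map_iSup]
      refine iSup_le fun j => ?_
      rw [Submodule.map_iSup]
      refine iSup_le fun hj => ?_
      refine le_iSup_of_le j (le_iSup_of_le hj ?_)
      refine (Submodule.map_inf_le _).trans ?_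
      exact inf_le_inf (hφFb _) (hφW _)
    exact hUle ⟨u, hu, rfl⟩
  refine Submodule.mem_sup.mpr ⟨φ y, hφy, φ u, hφu, ?_⟩
  rw [← map_add, hyu]

theorem strict (hφW : ∀ n, (D.Wc n).map φ ≤ D'.Wc n)
    (hφF : ∀ p, (D.F p).map φ ≤ D'.F p)
    (hφFb : ∀ q, (D.Fb q).map φ ≤ D'.Fb q) :
    (∀ n : ℤ, (D.Wc n).map φ = LinearMap.range φ ⊓ D'.Wc n) ∧
    (∀ p : ℤ, (D.F p).map φ = LinearMap.range φ ⊓ D'.F p) := by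
  -- common decomposition machinery
  have main : ∀ (C : ℤ × ℤ → Prop) (P : ℤ → Submodule ℂ V) (P' : ℤ → Submodule ℂ V')
      (d : ℤ), (∀ i : ℤ × ℤ, C i → D.I i.1 i.2 ≤ P d) →
      (P' d ≤ ⨆ (i : ℤ × ℤ) (_ : C i), D'.I i.1 i.2) →
      ∀ x, x ∈ LinearMap.range φ ⊓ P' d → x ∈ (P d).map φ := by
    intro C P P' d hCP hP' x hx
    obtain ⟨y, rfl⟩ := hx.1
    have hy : y ∈ ⨆ (i : ℤ × ℤ) (_ : i.1 + i.2 ≤ D.nt), D.I i.1 i.2 := by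
      have hy0 : y ∈ D.Wc D.nt := by rw [D.hnt]; trivial
      exact D.W_span D.nt hy0
    obtain ⟨u, huI, -, husum⟩ := D.decomp hy
    obtain ⟨w, hwI, hwC, hwsum⟩ := D'.decomp (hP' hx.2)
    classical
    set s : Finset (ℤ × ℤ) := u.support ∪ w.support with hs
    have hsu : ∑ i ∈ s, u i = y := by
      rw [← husum, Finsupp.sum]
      exact (Finset.sum_subset Finset.subset_union_left
        (fun i _ hi => Finsupp.notMem_support_iff.mp hi)).symm
    have hsw : ∑ i ∈ s, w i = φ y := by
      rw [← hwsum, Finsupp.sum]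
      exact (Finset.sum_subset Finset.subset_union_right
        (fun i _ hi => Finsupp.notMem_support_iff.mp hi)).symm
    have hgsum : ∑ i ∈ s, (φ (u i) - w i) = 0 := by
      rw [Finset.sum_sub_distrib, ← map_sum, hsu, hsw, sub_self]
    have hall := D'.indep s (fun i => φ (u i) - w i)
      (fun i _ => sub_mem (D.map_I D' φ hφW hφF hφFb i.1 i.2 (huI i)) (hwI i)) hgsum
    have hkey : ∀ i, φ (u i) = w i := by
      intro i
      by_cases his : i ∈ s
      · have := hall i his
        rwa [sub_eq_zero] at this
      · have hu0 : u i = 0 := Finsupp.notMem_support_iff.mp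
          (fun h => his (Finset.mem_union_left _ h))
        have hw0 : w i = 0 := Finsupp.notMem_support_iff.mp
          (fun h => his (Finset.mem_union_right _ h))
        rw [hu0, hw0, map_zero]
    refine Submodule.mem_map.mpr ⟨∑ i ∈ u.support.filter C, u i, ?_, ?_⟩
    · exact Submodule.sum_mem _ (fun i hi =>
        hCP i (Finset.mem_filter.mp hi).2 (huI i))
    · rw [map_sum]
      have hy' : φ y = ∑ i ∈ u.support, φ (u i) := by
        rw [← map_sum]; congr 1
        rw [← husum, Finsupp.sum]
      rw [hy', ← Finset.sum_filter_add_sum_filter_not u.support C (fun i => φ (u i))]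
      have hzero : ∑ i ∈ u.support.filter (fun i => ¬ C i), φ (u i) = 0 := by
        refine Finset.sum_eq_zero fun i hi => ?_
        rw [hkey i, hwC i (Finset.mem_filter.mp hi).2]
      rw [hzero, add_zero]
  constructor
  · intro n
    refine le_antisymm (le_inf (LinearMap.map_le_range) (hφW n)) ?_
    intro x hx
    refine main (fun i => i.1 + i.2 ≤ n) D.Wc D'.Wc n ?_ ?_ x hx
    · exact fun i hi => (D.I_le_W i.1 i.2).trans (D.hW hi)
    · exact D'.W_span n
  · intro p
    refine le_antisymm (le_inf (LinearMap.map_le_range) (hφF p)) ?_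
    intro x hx
    refine main (fun i => p ≤ i.1) D.F D'.F p ?_ ?_ x hx
    · exact fun i hi => (D.I_le_F i.1 i.2).trans (D.hF hi)
    · exact D'.F_span p

end Data
end MHS
namespace MHS

variable {Hq Hq' : Type*} [AddCommGroup Hq] [Module ℚ Hq]
  [AddCommGroup Hq'] [Module ℚ Hq']

lemma sigmaC_tmul (c : ℂ) (m : Hq) :
    sigmaC Hq (c ⊗ₜ[ℚ] m) = (starRingEnd ℂ c) ⊗ₜ[ℚ] m := rfl

lemma sigmaC_sigmaC (x : ℂ ⊗[ℚ] Hq) : sigmaC Hq (sigmaC Hq x) = x := by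
  induction x using TensorProduct.induction_on with
  | zero => simp
  | tmul c m => rw [sigmaC_tmul, sigmaC_tmul, Complex.conj_conj]
  | add a b ha hb => rw [map_add, map_add, ha, hb]

lemma baseChange_sigmaC (f : Hq →ₗ[ℚ] Hq') (x : ℂ ⊗[ℚ] Hq) :
    f.baseChange ℂ (sigmaC Hq x) = sigmaC Hq' (f.baseChange ℂ x) := by
  induction x using TensorProduct.induction_on with
  | zero => simp
  | tmul c m => rw [sigmaC_tmul, LinearMap.baseChange_tmul, LinearMap.baseChange_tmul,
      sigmaC_tmul]
  | add a b ha hb => simp [map_add, ha, hb]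

lemma complexifyFil_mono {W : ℤ → Submodule ℚ Hq} (hW : Monotone W) :
    Monotone (complexifyFil Hq W) := fun a b hab =>
  Submodule.span_mono (Set.image_mono (SetLike.coe_subset_coe.mpr (hW hab)))

lemma complexifyFil_bot {W : ℤ → Submodule ℚ Hq} {a : ℤ} (h : W a = ⊥) :
    complexifyFil Hq W a = ⊥ := by
  unfold complexifyFil
  rw [h]
  simp

lemma complexifyFil_top {W : ℤ → Submodule ℚ Hq} {a : ℤ} (h : W a = ⊤) :
    complexifyFil Hq W a = ⊤ := by
  unfold complexifyFil
  rw [h, eq_top_iff]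
  rintro x -
  induction x using TensorProduct.induction_on with
  | zero => exact zero_mem _
  | tmul c m =>
    have h1 : (1:ℂ) ⊗ₜ[ℚ] m ∈ Submodule.span ℂ
        (⇑(TensorProduct.mk ℚ ℂ Hq 1) '' ((⊤ : Submodule ℚ Hq) : Set Hq)) :=
      Submodule.subset_span ⟨m, trivial, rfl⟩
    have h2 : c ⊗ₜ[ℚ] m = c • ((1:ℂ) ⊗ₜ[ℚ] m) := by
      rw [TensorProduct.smul_tmul', smul_eq_mul, mul_one]
    rw [h2]
    exact Submodule.smul_mem _ _ h1
  | add a b ha hb => exact add_mem ha hb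

lemma exists_ratProj : ∃ φ : ℂ →ₗ[ℚ] ℚ, φ 1 = 1 := by
  obtain ⟨Q, hQ⟩ := Submodule.exists_isCompl (ℚ ∙ (1:ℂ))
  let e := LinearEquiv.toSpanNonzeroSingleton ℚ ℂ 1 one_ne_zero
  let π := Submodule.linearProjOfIsCompl _ Q hQ
  refine ⟨e.symm.toLinearMap ∘ₗ π, ?_⟩
  have h1 : π 1 = ⟨1, Submodule.mem_span_singleton_self 1⟩ := by
    have := Submodule.linearProjOfIsCompl_apply_left hQ
      (⟨1, Submodule.mem_span_singleton_self 1⟩ : ℚ ∙ (1:ℂ))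
    exact this
  have h2 : e.symm ⟨1, Submodule.mem_span_singleton_self 1⟩ = 1 := by
    rw [LinearEquiv.symm_apply_eq, LinearEquiv.toSpanNonzeroSingleton_one]
  simp only [LinearMap.coe_comp, Function.comp_apply, LinearEquiv.coe_coe]
  rw [h1, h2]

lemma rat_descent (M : Submodule ℚ Hq') (x : Hq')
    (h : (1:ℂ) ⊗ₜ[ℚ] x ∈ Submodule.span ℂ
      (⇑(TensorProduct.mk ℚ ℂ Hq' 1) '' (M : Set Hq'))) : x ∈ M := by
  obtain ⟨φ, hφ1⟩ := exists_ratProj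
  let Φ : (ℂ ⊗[ℚ] Hq') →ₗ[ℚ] Hq' :=
    (TensorProduct.lid ℚ Hq').toLinearMap ∘ₗ (φ.rTensor Hq')
  have hΦ : ∀ (c : ℂ) (m : Hq'), Φ (c ⊗ₜ[ℚ] m) = φ c • m := by
    intro c m
    simp [Φ, LinearMap.rTensor_tmul, TensorProduct.lid_tmul]
  have key : ∀ c : ℂ, Φ (c • ((1:ℂ) ⊗ₜ[ℚ] x)) ∈ M := by
    refine Submodule.span_induction
      (p := fun v _ => ∀ c : ℂ, Φ (c • v) ∈ M) ?_ ?_ ?_ ?_ h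
    · rintro v ⟨m, hm, rfl⟩ c
      have : c • ((TensorProduct.mk ℚ ℂ Hq' 1) m) = c ⊗ₜ[ℚ] m := by
        show c • ((1:ℂ) ⊗ₜ[ℚ] m) = c ⊗ₜ[ℚ] m
        rw [TensorProduct.smul_tmul', smul_eq_mul, mul_one]
      rw [this, hΦ]
      exact Submodule.smul_mem _ _ hm
    · intro c; rw [smul_zero, map_zero]; exact zero_mem _
    · intro u v hu hv ihu ihv c
      rw [smul_add, map_add]
      exact add_mem (ihu c) (ihv c)
    · intro a u hu ih c
      rw [smul_smul]
      exact ih (c * a)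
  have := key 1
  rwa [one_smul, hΦ, hφ1, one_smul] at this

lemma map_baseChange_span (f : Hq →ₗ[ℚ] Hq') (N : Submodule ℚ Hq) :
    Submodule.map (f.baseChange ℂ)
      (Submodule.span ℂ (⇑(TensorProduct.mk ℚ ℂ Hq 1) '' (N : Set Hq)))
    = Submodule.span ℂ (⇑(TensorProduct.mk ℚ ℂ Hq' 1) ''
        ((Submodule.map f N : Submodule ℚ Hq') : Set Hq')) := by
  rw [Submodule.map_span]
  congr 1
  rw [Submodule.map_coe, ← Set.image_comp, ← Set.image_comp]
  refine Set.image_congr fun m _ => ?_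
  show f.baseChange ℂ ((1:ℂ) ⊗ₜ[ℚ] m) = (1:ℂ) ⊗ₜ[ℚ] (f m)
  rw [LinearMap.baseChange_tmul]

end MHS

/-- Every morphism of mixed Hodge structures is strict for both the weight and the
Hodge filtrations: if `f : H_ℚ → H'_ℚ` is a `ℚ`-linear map compatible with `W` and
(after `⊗ℂ`) with `F`, then `f(W_n H_ℚ) = f(H_ℚ) ∩ W_n H'_ℚ` for all `n`, and
`f(F^p H_ℂ) = f(H_ℂ) ∩ F^p H'_ℂ` for all `p`. -/
theorem stmt19 (Hq Hq' : Type*)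
    [AddCommGroup Hq] [Module ℚ Hq] [FiniteDimensional ℚ Hq]
    [AddCommGroup Hq'] [Module ℚ Hq'] [FiniteDimensional ℚ Hq']
    (W : ℤ → Submodule ℚ Hq) (W' : ℤ → Submodule ℚ Hq')
    (hW : Monotone W) (hW' : Monotone W')
    (hWbot : ∃ a, W a = ⊥) (hWtop : ∃ a, W a = ⊤)
    (hW'bot : ∃ a, W' a = ⊥) (hW'top : ∃ a, W' a = ⊤)
    (F : ℤ → Submodule ℂ (ℂ ⊗[ℚ] Hq)) (F' : ℤ → Submodule ℂ (ℂ ⊗[ℚ] Hq'))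
    (hF : Antitone F) (hF' : Antitone F')
    (hFtop : ∃ a, F a = ⊤) (hFbot : ∃ a, F a = ⊥)
    (hF'top : ∃ a, F' a = ⊤) (hF'bot : ∃ a, F' a = ⊥)
    -- the conjugate Hodge filtrations :
    (Fbar : ℤ → Submodule ℂ (ℂ ⊗[ℚ] Hq)) (F'bar : ℤ → Submodule ℂ (ℂ ⊗[ℚ] Hq'))
    (hFbar : ∀ p : ℤ, (Fbar p : Set (ℂ ⊗[ℚ] Hq)) = ⇑(sigmaC Hq) '' (F p : Set (ℂ ⊗[ℚ] Hq)))
    (hF'bar : ∀ p : ℤ, (F'bar p : Set (ℂ ⊗[ℚ] Hq')) =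
      ⇑(sigmaC Hq') '' (F' p : Set (ℂ ⊗[ℚ] Hq')))
    -- `F` and `F̄` induce a pure Hodge structure of weight `n` on each `Gr^W_n`,
    -- expressed at the subspace level via the complexified weight filtration :
    (hHS : ∀ n p q : ℤ, p + q ≠ n →
      ((F p ⊓ complexifyFil Hq W n) ⊔ complexifyFil Hq W (n - 1)) ⊓
          ((Fbar q ⊓ complexifyFil Hq W n) ⊔ complexifyFil Hq W (n - 1)) ≤
        (((F (p + 1) ⊓ complexifyFil Hq W n) ⊔ complexifyFil Hq W (n - 1)) ⊓
            ((Fbar q ⊓ complexifyFil Hq W n) ⊔ complexifyFil Hq W (n - 1))) ⊔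
        (((F p ⊓ complexifyFil Hq W n) ⊔ complexifyFil Hq W (n - 1)) ⊓
            ((Fbar (q + 1) ⊓ complexifyFil Hq W n) ⊔ complexifyFil Hq W (n - 1))))
    (hHS' : ∀ n p q : ℤ, p + q ≠ n →
      ((F' p ⊓ complexifyFil Hq' W' n) ⊔ complexifyFil Hq' W' (n - 1)) ⊓
          ((F'bar q ⊓ complexifyFil Hq' W' n) ⊔ complexifyFil Hq' W' (n - 1)) ≤
        (((F' (p + 1) ⊓ complexifyFil Hq' W' n) ⊔ complexifyFil Hq' W' (n - 1)) ⊓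
            ((F'bar q ⊓ complexifyFil Hq' W' n) ⊔ complexifyFil Hq' W' (n - 1))) ⊔
        (((F' p ⊓ complexifyFil Hq' W' n) ⊔ complexifyFil Hq' W' (n - 1)) ⊓
            ((F'bar (q + 1) ⊓ complexifyFil Hq' W' n) ⊔ complexifyFil Hq' W' (n - 1))))
    -- a morphism of mixed Hodge structures :
    (f : Hq →ₗ[ℚ] Hq')
    (hfW : ∀ n : ℤ, Submodule.map f (W n) ≤ W' n)
    (hfF : ∀ p : ℤ, Submodule.map (f.baseChange ℂ) (F p) ≤ F' p) :
    (∀ n : ℤ, Submodule.map f (W n) = LinearMap.range f ⊓ W' n) ∧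
    (∀ p : ℤ, Submodule.map (f.baseChange ℂ) (F p) =
      LinearMap.range (f.baseChange ℂ) ⊓ F' p) := by
  obtain ⟨nb, hnb⟩ := hWbot
  obtain ⟨nt, hnt⟩ := hWtop
  obtain ⟨nb', hnb'⟩ := hW'bot
  obtain ⟨nt', hnt'⟩ := hW'top
  obtain ⟨aT, haT⟩ := hFtop
  obtain ⟨aB, haB⟩ := hFbot
  obtain ⟨aT', haT'⟩ := hF'top
  obtain ⟨aB', haB'⟩ := hF'bot
  have hFbarTop : Fbar aT = ⊤ := by
    rw [eq_top_iff]
    rintro x -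
    rw [← SetLike.mem_coe, hFbar]
    exact ⟨sigmaC Hq x, by rw [haT]; trivial, MHS.sigmaC_sigmaC x⟩
  have hFbarBot : Fbar aB = ⊥ := by
    rw [eq_bot_iff]
    intro x hx
    rw [← SetLike.mem_coe, hFbar] at hx
    obtain ⟨y, hy, rfl⟩ := hx
    rw [haB] at hy
    have hy0 : y = 0 := by simpa using hy
    rw [hy0, map_zero]
    exact zero_mem ⊥
  have hF'barTop : F'bar aT' = ⊤ := by
    rw [eq_top_iff]
    rintro x -
    rw [← SetLike.mem_coe, hF'bar]
    exact ⟨sigmaC Hq' x, by rw [haT']; trivial, MHS.sigmaC_sigmaC x⟩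
  have hF'barBot : F'bar aB' = ⊥ := by
    rw [eq_bot_iff]
    intro x hx
    rw [← SetLike.mem_coe, hF'bar] at hx
    obtain ⟨y, hy, rfl⟩ := hx
    rw [haB'] at hy
    have hy0 : y = 0 := by simpa using hy
    rw [hy0, map_zero]
    exact zero_mem ⊥
  let D : MHS.Data (ℂ ⊗[ℚ] Hq) :=
    { Wc := complexifyFil Hq W, F := F, Fb := Fbar,
      hW := MHS.complexifyFil_mono hW, hF := hF,
      hFb := fun a b hab => by
        rw [← SetLike.coe_subset_coe, hFbar, hFbar]
        exact Set.image_mono (SetLike.coe_subset_coe.mpr (hF hab)),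
      nb := nb, nt := nt,
      hnb := MHS.complexifyFil_bot hnb, hnt := MHS.complexifyFil_top hnt,
      aT := aT, aB := aB, bT := aT, bB := aB,
      haT := haT, haB := haB, hbT := hFbarTop, hbB := hFbarBot,
      hHS := hHS }
  let D' : MHS.Data (ℂ ⊗[ℚ] Hq') :=
    { Wc := complexifyFil Hq' W', F := F', Fb := F'bar,
      hW := MHS.complexifyFil_mono hW', hF := hF',
      hFb := fun a b hab => by
        rw [← SetLike.coe_subset_coe, hF'bar, hF'bar]
        exact Set.image_mono (SetLike.coe_subset_coe.mpr (hF' hab)),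
      nb := nb', nt := nt',
      hnb := MHS.complexifyFil_bot hnb', hnt := MHS.complexifyFil_top hnt',
      aT := aT', aB := aB', bT := aT', bB := aB',
      haT := haT', haB := haB', hbT := hF'barTop, hbB := hF'barBot,
      hHS := hHS' }
  have hφW : ∀ n : ℤ, Submodule.map (f.baseChange ℂ) (complexifyFil Hq W n) ≤
      complexifyFil Hq' W' n := by
    intro n
    refine le_trans (le_of_eq (MHS.map_baseChange_span f (W n))) ?_
    exact Submodule.span_mono (Set.image_mono (SetLike.coe_subset_coe.mpr (hfW n)))
  have hφFb : ∀ q : ℤ, Submodule.map (f.baseChange ℂ) (Fbar q) ≤ F'bar q := by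
    intro q x hx
    obtain ⟨v, hv, rfl⟩ := hx
    have hv' : v ∈ (⇑(sigmaC Hq) '' (F q : Set (ℂ ⊗[ℚ] Hq))) := by
      rw [← hFbar]; exact hv
    obtain ⟨w, hw, rfl⟩ := hv'
    have hgoal : (f.baseChange ℂ) (sigmaC Hq w) ∈ (F'bar q : Set (ℂ ⊗[ℚ] Hq')) := by
      rw [hF'bar]
      exact ⟨f.baseChange ℂ w, SetLike.mem_coe.mpr (hfF q ⟨w, hw, rfl⟩),
        (MHS.baseChange_sigmaC f w).symm⟩
    exact hgoal
  have hstrict := MHS.Data.strict D D' (f.baseChange ℂ) hφW hfF hφFb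
  have hWs : ∀ n : ℤ, Submodule.map (f.baseChange ℂ) (complexifyFil Hq W n) =
      LinearMap.range (f.baseChange ℂ) ⊓ complexifyFil Hq' W' n := hstrict.1
  have hFs : ∀ p : ℤ, Submodule.map (f.baseChange ℂ) (F p) =
      LinearMap.range (f.baseChange ℂ) ⊓ F' p := hstrict.2
  constructor
  · intro n
    refine le_antisymm (le_inf LinearMap.map_le_range (hfW n)) ?_
    intro x hx
    obtain ⟨hxr, hxW⟩ := Submodule.mem_inf.mp hx
    have h1 : (1:ℂ) ⊗ₜ[ℚ] x ∈ LinearMap.range (f.baseChange ℂ) ⊓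
        complexifyFil Hq' W' n := by
      constructor
      · obtain ⟨y, hy⟩ := hxr
        exact ⟨(1:ℂ) ⊗ₜ[ℚ] y, by rw [LinearMap.baseChange_tmul, hy]⟩
      · exact Submodule.subset_span ⟨x, hxW, rfl⟩
    have h2 : (1:ℂ) ⊗ₜ[ℚ] x ∈
        Submodule.map (f.baseChange ℂ) (complexifyFil Hq W n) := by
      rw [hWs n]; exact h1
    have h3 : (1:ℂ) ⊗ₜ[ℚ] x ∈ Submodule.span ℂ (⇑(TensorProduct.mk ℚ ℂ Hq' 1) ''
        ((Submodule.map f (W n) : Submodule ℚ Hq') : Set Hq')) := by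
      rw [← MHS.map_baseChange_span f (W n)]
      exact h2
    exact MHS.rat_descent _ x h3
  · intro p
    exact le_antisymm (le_inf LinearMap.map_le_range (hfF p)) (hFs p).ge
end
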